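/- arXiv:1709.01747 — 6 statements merged into one kernel-verified Lean document; each statement's English description precedes it below -/
import Mathlib

section
/- Let G be a locally compact Hausdorff abelian topological group with Haar measure, let L be a countably infinite lattice in G (a discrete closed subgroup with compact quotient G/L), and let ψ ∈ L²(G) be nonzero. Then the system of translates F_ψ = (T_k ψ)_{k∈L} is democratic in L²(G) if and only if there exist constants 0 < c_ψ ≤ C_ψ < ∞ such that for every nonempty finite set Γ ⊂ L one has c_ψ·card(Γ) ≤ ‖∑_{k∈Γ} T_k ψ‖²_{L²(G)} ≤ C_ψ·card(Γ). -/
open MeasureTheory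

noncomputable section

/-- A family of (nonzero) vectors in a normed space is *democratic* if there is a constant
`D ∈ (0,∞)` such that for any two finite subsets of the family with the same cardinality the
norms of the sums of the normalized vectors are comparable with constant `D`. -/
def Democratic {X : Type*} [NormedAddCommGroup X] [NormedSpace ℝ X] {ι : Type*} (f : ι → X) :
    Prop :=
  ∃ D : ℝ, 0 < D ∧ ∀ Γ₁ Γ₂ : Finset ι, Γ₁.card = Γ₂.card →
    ‖∑ k ∈ Γ₁, ‖f k‖⁻¹ • f k‖ ≤ D * ‖∑ k ∈ Γ₂, ‖f k‖⁻¹ • f k‖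

/-- The translate `T_y f`, `(T_y f)(x) = f (x - y)`, of an `L²` function. -/
def translateLp {G : Type*} [MeasurableSpace G] [AddCommGroup G] [MeasurableAdd G]
    (μ : Measure G) [μ.IsAddRightInvariant] (y : G) (f : Lp ℂ 2 μ) : Lp ℂ 2 μ :=
  Lp.compMeasurePreserving (fun x => x - y) (measurePreserving_sub_right μ y) f

section helpers
open Set Filter Topology Finset

/-! ### Basic properties of `translateLp` -/

section basic
variable {G : Type*} [MeasurableSpace G] [AddCommGroup G] [MeasurableAdd G]
  (μ : Measure G) [μ.IsAddRightInvariant]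

theorem translateLp_coeFn (y : G) (f : Lp ℂ 2 μ) :
    translateLp μ y f =ᵐ[μ] fun x => f (x - y) :=
  Lp.coeFn_compMeasurePreserving f _

theorem translateLp_norm (y : G) (f : Lp ℂ 2 μ) : ‖translateLp μ y f‖ = ‖f‖ :=
  Lp.norm_compMeasurePreserving f _

theorem translateLp_sub (y : G) (f g : Lp ℂ 2 μ) :
    translateLp μ y (f - g) = translateLp μ y f - translateLp μ y g :=
  map_sub (Lp.compMeasurePreserving (fun x => x - y) (measurePreserving_sub_right μ y)) f g

theorem translateLp_comp (a b : G) (f : Lp ℂ 2 μ) :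
    translateLp μ a (translateLp μ b f) = translateLp μ (b + a) f := by
  apply Lp.ext (p := (2 : ENNReal)) (μ := μ)
  have h1 : translateLp μ a (translateLp μ b f) =ᵐ[μ]
      fun x => (translateLp μ b f) (x - a) := translateLp_coeFn μ a _
  have h2 : (fun x => (translateLp μ b f) (x - a)) =ᵐ[μ]
      fun x => f (x - a - b) := by
    have := (translateLp_coeFn μ b f)
    have := ((measurePreserving_sub_right μ a).quasiMeasurePreserving).ae_eq this
    exact this
  refine (h1.trans (h2.trans ?_)).trans (translateLp_coeFn μ (b + a) f).symm
  filter_upwards with x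
  simp [sub_sub, add_comm]

theorem translateLp_inner (y : G) (f g : Lp ℂ 2 μ) :
    (inner ℂ (translateLp μ y f) (translateLp μ y g) : ℂ) = inner ℂ f g := by
  rw [L2.inner_def, L2.inner_def]
  have h1 : (fun a => (inner ℂ ((translateLp μ y f) a) ((translateLp μ y g) a) : ℂ)) =ᵐ[μ]
      fun a => (inner ℂ (f (a - y)) (g (a - y)) : ℂ) := by
    filter_upwards [translateLp_coeFn μ y f, translateLp_coeFn μ y g] with a hf hg
    rw [hf, hg]
  rw [integral_congr_ae h1]
  exact (measurePreserving_sub_right μ y).integral_comp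
    (MeasurableEquiv.subRight y).measurableEmbedding (fun a => (inner ℂ (f a) (g a) : ℂ))

theorem translateLp_inner_shift (a b : G) (ψ : Lp ℂ 2 μ) :
    (inner ℂ (translateLp μ a ψ) (translateLp μ b ψ) : ℂ) =
      inner ℂ (translateLp μ (a - b) ψ) ψ := by
  have : translateLp μ a ψ = translateLp μ b (translateLp μ (a - b) ψ) := by
    rw [translateLp_comp, sub_add_cancel]
  rw [this, ← translateLp_inner μ b (translateLp μ (a - b) ψ) ψ]

end basic

/-! ### Almost orthogonality of sums in a Hilbert space -/

theorem norm_sum_sq_bounds {E : Type*} [NormedAddCommGroup E] [InnerProductSpace ℂ E]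
    {ι : Type*} [DecidableEq ι] (s : Finset ι) (v : ι → E) (r ε : ℝ) (hε : 0 ≤ ε)
    (hn : ∀ i ∈ s, ‖v i‖ = r)
    (ho : ∀ i ∈ s, ∀ j ∈ s, i ≠ j → ‖(inner ℂ (v i) (v j) : ℂ)‖ ≤ ε) :
    (s.card : ℝ) * r ^ 2 - (s.card : ℝ) ^ 2 * ε ≤ ‖∑ i ∈ s, v i‖ ^ 2 ∧
    ‖∑ i ∈ s, v i‖ ^ 2 ≤ (s.card : ℝ) * r ^ 2 + (s.card : ℝ) ^ 2 * ε := by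
  have hsq : ‖∑ i ∈ s, v i‖ ^ 2 =
      ∑ i ∈ s, ∑ j ∈ s, (inner ℂ (v i) (v j) : ℂ).re := by
    rw [← inner_self_eq_norm_sq (𝕜 := ℂ)]
    rw [sum_inner]
    simp_rw [inner_sum]
    simp [Complex.re_sum]
  have hdiag : ∀ i ∈ s, ∑ j ∈ s, (inner ℂ (v i) (v j) : ℂ).re
      = r ^ 2 + ∑ j ∈ s.erase i, (inner ℂ (v i) (v j) : ℂ).re := by
    intro i hi
    rw [← Finset.add_sum_erase s _ hi]
    congr 1
    have := inner_self_eq_norm_sq (𝕜 := ℂ) (v i)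
    simp only [RCLike.re_to_complex] at this
    rw [this, hn i hi]
  have hoff : ∀ i ∈ s, |∑ j ∈ s.erase i, (inner ℂ (v i) (v j) : ℂ).re| ≤ (s.card : ℝ) * ε := by
    intro i hi
    calc |∑ j ∈ s.erase i, (inner ℂ (v i) (v j) : ℂ).re|
        ≤ ∑ j ∈ s.erase i, |(inner ℂ (v i) (v j) : ℂ).re| := Finset.abs_sum_le_sum_abs _ _
      _ ≤ ∑ j ∈ s.erase i, ε := by
          refine Finset.sum_le_sum fun j hj => ?_
          have hji := (Finset.mem_erase.1 hj)
          refine le_trans ?_ (ho i hi j hji.2 (fun h => hji.1 (h ▸ rfl)))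
          exact Complex.abs_re_le_norm _
      _ ≤ (s.card : ℝ) * ε := by
          rw [Finset.sum_const, nsmul_eq_mul]
          exact mul_le_mul_of_nonneg_right
            (by exact_mod_cast Finset.card_le_card (Finset.erase_subset i s)) hε
  have key : |‖∑ i ∈ s, v i‖ ^ 2 - (s.card : ℝ) * r ^ 2| ≤ (s.card : ℝ) ^ 2 * ε := by
    rw [hsq, Finset.sum_congr rfl hdiag, Finset.sum_add_distrib, Finset.sum_const, nsmul_eq_mul]
    rw [add_sub_cancel_left]
    calc |∑ i ∈ s, ∑ j ∈ s.erase i, (inner ℂ (v i) (v j) : ℂ).re|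
        ≤ ∑ i ∈ s, |∑ j ∈ s.erase i, (inner ℂ (v i) (v j) : ℂ).re| := Finset.abs_sum_le_sum_abs _ _
      _ ≤ ∑ i ∈ s, (s.card : ℝ) * ε := Finset.sum_le_sum hoff
      _ = (s.card : ℝ) ^ 2 * ε := by rw [Finset.sum_const, nsmul_eq_mul]; ring
  constructor <;> [skip; skip] <;> cases' abs_le.1 key with h1 h2 <;> linarith

/-! ### Topological lemmas about lattices -/

theorem lattice_inter_compact_finite {G : Type*} [AddCommGroup G] [TopologicalSpace G]
    (L : AddSubgroup G) (hLdisc : DiscreteTopology L) (hLclosed : IsClosed (L : Set G))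
    {K : Set G} (hK : IsCompact K) : {k : L | (k : G) ∈ K}.Finite := by
  have hemb := hLclosed.isClosedEmbedding_subtypeVal
  have hcomp : IsCompact (((↑) : L → G) ⁻¹' K) := hemb.isCompact_preimage hK
  exact hcomp.finite ⟨by infer_instance⟩

theorem sigmaCompact_of_cocompact {G : Type*} [AddCommGroup G] [TopologicalSpace G]
    [IsTopologicalAddGroup G] [LocallyCompactSpace G] (L : AddSubgroup G)
    (hLcount : Countable L) (hLcocompact : CompactSpace (G ⧸ L)) :
    SigmaCompactSpace G := by
  classical
  have hV : ∀ x : G, ∃ V : Set G, IsCompact V ∧ V ∈ nhds x := by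
    intro x
    obtain ⟨V, hVc, hVn⟩ := exists_compact_mem_nhds x
    exact ⟨V, hVc, hVn⟩
  choose V hVc hVn using hV
  set q : G → G ⧸ L := QuotientAddGroup.mk with hq
  have hqopen : IsOpenMap q := QuotientAddGroup.isOpenMap_coe
  have hcover : (Set.univ : Set (G ⧸ L)) ⊆ ⋃ x : G, q '' interior (V x) := by
    intro z _
    obtain ⟨g, rfl⟩ := QuotientAddGroup.mk_surjective z
    exact Set.mem_iUnion.2 ⟨g, ⟨g, mem_interior_iff_mem_nhds.2 (hVn g), rfl⟩⟩
  obtain ⟨t, ht⟩ := isCompact_univ.elim_finite_subcover (fun x : G => q '' interior (V x))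
    (fun x => hqopen _ isOpen_interior) hcover
  set K : Set G := ⋃ x ∈ t, V x with hK
  have hKc : IsCompact K := t.isCompact_biUnion fun x _ => hVc x
  refine SigmaCompactSpace.of_countable
    (Set.range (fun l : L => (fun x => (l : G) + x) '' K)) (Set.countable_range _) ?_ ?_
  · rintro s ⟨l, rfl⟩
    exact hKc.image (continuous_add_left _)
  · rw [Set.sUnion_range]
    apply Set.eq_univ_of_forall
    intro g
    have : q g ∈ ⋃ x ∈ t, q '' interior (V x) := ht (Set.mem_univ _)
    obtain ⟨x, hxt, y, hy, hqy⟩ := by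
      simpa using this
    have hmem : -y + g ∈ L := by
      rw [← QuotientAddGroup.eq]
      exact hqy
    refine Set.mem_iUnion.2 ⟨⟨-y + g, hmem⟩, ⟨y, ?_, by show (-y + g) + y = g; abel⟩⟩
    exact Set.mem_biUnion hxt (interior_subset hy)

/-! ### Decay of correlations of translates -/

section decay
variable {G : Type*} [AddCommGroup G] [TopologicalSpace G] [IsTopologicalAddGroup G]
  [T2Space G] [SigmaCompactSpace G] [MeasurableSpace G] [BorelSpace G]
  (μ : Measure G) [μ.IsAddRightInvariant]

theorem translate_inner_decay (ψ : Lp ℂ 2 μ) {ε : ℝ} (hε : 0 < ε) :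
    ∃ K : Set G, IsCompact K ∧ ∀ a : G, a ∉ K →
      ‖(inner ℂ (translateLp μ a ψ) ψ : ℂ)‖ < ε := by
  classical
  set Nψ : ℝ := ‖ψ‖ with hNψ
  have hNψ0 : 0 ≤ Nψ := norm_nonneg _
  set δ : ℝ := min 1 (ε / (2 * Nψ + 2)) with hδ
  have hδpos : 0 < δ := lt_min one_pos (div_pos hε (by linarith))
  have hδ1 : δ ≤ 1 := min_le_left _ _
  have hδ2 : δ * (2 * Nψ + 2) ≤ ε := by
    rw [← le_div_iff₀ (by linarith)]
    exact min_le_right _ _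
  set Φ : G → ℂ := (ψ : G → ℂ) with hΦ
  have hFint : Integrable (fun x => RCLike.re (inner ℂ (Φ x) (Φ x) : ℂ)) μ := by
    have h := L2.integrable_inner (𝕜 := ℂ) ψ ψ
    exact h.re
  set Fn : G → ℝ := fun x => RCLike.re (inner ℂ (Φ x) (Φ x) : ℂ) with hFn
  have hFnnn : ∀ x, 0 ≤ Fn x := fun x => inner_self_nonneg
  have hFneq : ∀ x, Fn x = ‖Φ x‖ ^ 2 := fun x => inner_self_eq_norm_sq (𝕜 := ℂ) (Φ x)
  have hint : IntegrableOn Fn (⋃ n, compactCovering G n) μ := by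
    rw [iUnion_compactCovering]
    exact hFint.integrableOn
  have htend : Tendsto (fun n => ∫ x in compactCovering G n, Fn x ∂μ) atTop
      (𝓝 (∫ x, Fn x ∂μ)) := by
    have h := tendsto_setIntegral_of_monotone
      (fun n => (isCompact_compactCovering G n).isClosed.measurableSet)
      (compactCovering_subset G) hint
    rwa [iUnion_compactCovering, setIntegral_univ] at h
  have hev : ∀ᶠ n in atTop, (∫ x, Fn x ∂μ) - δ ^ 2 < ∫ x in compactCovering G n, Fn x ∂μ :=
    htend.eventually (eventually_gt_nhds (sub_lt_self _ (by positivity)))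
  obtain ⟨n, hn⟩ := hev.exists
  set K₀ : Set G := compactCovering G n with hK₀
  have hK₀c : IsCompact K₀ := isCompact_compactCovering G n
  have hK₀m : MeasurableSet K₀ := hK₀c.isClosed.measurableSet
  have hmem : MemLp Φ 2 μ := Lp.memLp ψ
  set g : Lp ℂ 2 μ := (hmem.indicator hK₀m).toLp (K₀.indicator Φ) with hg
  have hgco : (g : G → ℂ) =ᵐ[μ] K₀.indicator Φ := MemLp.coeFn_toLp _
  have hdco : ((ψ - g : Lp ℂ 2 μ) : G → ℂ) =ᵐ[μ] K₀ᶜ.indicator Φ := by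
    filter_upwards [Lp.coeFn_sub ψ g, hgco] with x h1 h2
    rw [h1, Pi.sub_apply, h2]
    by_cases hx : x ∈ K₀
    · rw [Set.indicator_of_mem hx, Set.indicator_of_notMem (Set.notMem_compl_iff.mpr hx),
        sub_self]
    · rw [Set.indicator_of_notMem hx, Set.indicator_of_mem (Set.mem_compl hx), sub_zero]
  have hnormsq : ‖(ψ - g : Lp ℂ 2 μ)‖ ^ 2 = ∫ x, K₀ᶜ.indicator Fn x ∂μ := by
    rw [← inner_self_eq_norm_sq (𝕜 := ℂ) (ψ - g : Lp ℂ 2 μ), L2.inner_def,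
      ← integral_re (L2.integrable_inner _ _)]
    refine integral_congr_ae ?_
    filter_upwards [hdco] with x hx
    rw [hx]
    by_cases hmemx : x ∈ K₀
    · rw [Set.indicator_of_notMem (Set.notMem_compl_iff.mpr hmemx),
        Set.indicator_of_notMem (Set.notMem_compl_iff.mpr hmemx)]
      simp
    · rw [Set.indicator_of_mem (Set.mem_compl hmemx), Set.indicator_of_mem (Set.mem_compl hmemx)]
  have htail : ∫ x, K₀ᶜ.indicator Fn x ∂μ < δ ^ 2 := by
    rw [integral_indicator hK₀m.compl]
    have hsplit := integral_add_compl hK₀m hFint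
    have : ∫ x in K₀ᶜ, Fn x ∂μ = (∫ x, Fn x ∂μ) - ∫ x in K₀, Fn x ∂μ := by linarith
    rw [this]
    linarith
  have hψg : ‖(ψ - g : Lp ℂ 2 μ)‖ ≤ δ := by
    nlinarith [norm_nonneg (ψ - g : Lp ℂ 2 μ), hnormsq, htail]
  have hgnorm : ‖g‖ ≤ Nψ + δ := by
    have : g = ψ - (ψ - g) := by abel
    rw [this]
    exact (norm_sub_le _ _).trans (by linarith)
  refine ⟨(fun p : G × G => p.1 - p.2) '' (K₀ ×ˢ K₀),
    (hK₀c.prod hK₀c).image (continuous_fst.sub continuous_snd), ?_⟩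
  intro a ha
  have hthird : (inner ℂ (translateLp μ a g) g : ℂ) = 0 := by
    rw [L2.inner_def]
    have hzero : (fun x => (inner ℂ ((translateLp μ a g) x) (g x) : ℂ)) =ᵐ[μ] fun _ => 0 := by
      have h1 : (translateLp μ a g : G → ℂ) =ᵐ[μ] fun x => g (x - a) := translateLp_coeFn μ a g
      have h2 : (fun x => (g : G → ℂ) (x - a)) =ᵐ[μ] fun x => K₀.indicator Φ (x - a) :=
        ((measurePreserving_sub_right μ a).quasiMeasurePreserving).ae_eq hgco
      filter_upwards [h1, h2, hgco] with x hx1 hx2 hx3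
      rw [hx1, hx2, hx3]
      by_cases hx : x ∈ K₀
      · by_cases hx' : x - a ∈ K₀
        · exact absurd ⟨(x, x - a), Set.mk_mem_prod hx hx', sub_sub_cancel x a⟩ ha
        · rw [Set.indicator_of_notMem hx', inner_zero_left]
      · rw [Set.indicator_of_notMem hx, inner_zero_right]
    rw [integral_congr_ae hzero, integral_zero]
  have hdecomp : (inner ℂ (translateLp μ a ψ) ψ : ℂ) =
      inner ℂ (translateLp μ a (ψ - g)) ψ + inner ℂ (translateLp μ a g) (ψ - g) +
        inner ℂ (translateLp μ a g) g := by
    rw [translateLp_sub, inner_sub_left, inner_sub_right]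
    ring
  rw [hdecomp, hthird, add_zero]
  have h1 : ‖(inner ℂ (translateLp μ a (ψ - g)) ψ : ℂ)‖ ≤ δ * Nψ := by
    refine (norm_inner_le_norm _ _).trans ?_
    rw [translateLp_norm]
    exact mul_le_mul_of_nonneg_right hψg hNψ0
  have h2 : ‖(inner ℂ (translateLp μ a g) (ψ - g) : ℂ)‖ ≤ (Nψ + δ) * δ := by
    refine (norm_inner_le_norm _ _).trans ?_
    rw [translateLp_norm]
    exact mul_le_mul hgnorm hψg (norm_nonneg _) (by linarith)
  calc ‖(inner ℂ (translateLp μ a (ψ - g)) ψ : ℂ) + inner ℂ (translateLp μ a g) (ψ - g)‖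
      ≤ δ * Nψ + (Nψ + δ) * δ := (norm_add_le _ _).trans (by linarith)
    _ < ε := by nlinarith

end decay

/-! ### Selection of almost orthogonal translates along the lattice -/

section selection
variable {G : Type*} [AddCommGroup G] [TopologicalSpace G] [IsTopologicalAddGroup G]
  [T2Space G] [SigmaCompactSpace G] [MeasurableSpace G] [BorelSpace G]
  (μ : Measure G) [μ.IsAddRightInvariant]

theorem exists_almost_orthogonal_translates
    (L : AddSubgroup G) (hLdisc : DiscreteTopology L) (hLclosed : IsClosed (L : Set G))
    (hLinf : Infinite L) (ψ : Lp ℂ 2 μ) {ε : ℝ} (hε : 0 < ε) (n : ℕ) :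
    ∃ Γ : Finset L, Γ.card = n ∧ ∀ k ∈ Γ, ∀ l ∈ Γ, k ≠ l →
      ‖(inner ℂ (translateLp μ (k : G) ψ) (translateLp μ (l : G) ψ) : ℂ)‖ < ε := by
  classical
  obtain ⟨K, hKc, hKsmall⟩ := translate_inner_decay μ ψ hε
  induction n with
  | zero => exact ⟨∅, rfl, by simp⟩
  | succ n ih =>
    obtain ⟨Γ, hcard, hΓ⟩ := ih
    set bad : Set L := (↑Γ : Set L) ∪
      ⋃ l ∈ Γ, ({k : L | (k : G) ∈ (fun x => x + (l : G)) '' K} ∪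
        {k : L | (k : G) ∈ (fun x => (l : G) - x) '' K}) with hbad
    have hbadfin : bad.Finite := by
      refine (Γ.finite_toSet).union (Set.Finite.biUnion Γ.finite_toSet fun l _ => ?_)
      exact (lattice_inter_compact_finite L hLdisc hLclosed
          (hKc.image (continuous_id.add continuous_const))).union
        (lattice_inter_compact_finite L hLdisc hLclosed
          (hKc.image (continuous_const.sub continuous_id)))
    obtain ⟨k₀, hk₀⟩ := hbadfin.infinite_compl.nonempty
    have hk₀Γ : k₀ ∉ Γ := fun h => hk₀ (Set.mem_union_left _ h)
    refine ⟨insert k₀ Γ, by rw [Finset.card_insert_of_notMem hk₀Γ, hcard], ?_⟩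
    intro k hk l hl hne
    rcases Finset.mem_insert.1 hk with hk' | hk' <;>
      rcases Finset.mem_insert.1 hl with hl' | hl'
    · exact absurd (hk'.trans hl'.symm) hne
    · subst hk'
      rw [translateLp_inner_shift]
      refine hKsmall _ fun hmem => hk₀ (Set.mem_union_right _ ?_)
      refine Set.mem_biUnion hl' (Set.mem_union_left _ ?_)
      exact ⟨(k : G) - (l : G), hmem, sub_add_cancel _ _⟩
    · subst hl'
      rw [translateLp_inner_shift]
      refine hKsmall _ fun hmem => hk₀ (Set.mem_union_right _ ?_)
      refine Set.mem_biUnion hk' (Set.mem_union_right _ ?_)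
      exact ⟨(k : G) - (l : G), hmem, sub_sub_cancel _ _⟩
    · exact hΓ k hk' l hl' hne

end selection

end helpers

set_option maxHeartbeats 1600000 in
/-- The system of translates `F_ψ = (T_k ψ)_{k∈L}` of a nonzero `ψ ∈ L²(G)` along a countably
infinite lattice `L` in a locally compact Hausdorff abelian group `G` is democratic if and only
if there are constants `0 < c ≤ C < ∞` with
`c · card Γ ≤ ‖∑_{k∈Γ} T_k ψ‖² ≤ C · card Γ` for every nonempty finite `Γ ⊆ L`. -/
theorem democratic_iff_norm_sq_sum_translates_comparable_card
    {G : Type*} [AddCommGroup G] [TopologicalSpace G] [IsTopologicalAddGroup G]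
    [T2Space G] [LocallyCompactSpace G] [MeasurableSpace G] [BorelSpace G]
    (μ : Measure G) [μ.IsAddHaarMeasure]
    (L : AddSubgroup G) (hLdisc : DiscreteTopology L) (hLclosed : IsClosed (L : Set G))
    (hLcount : Countable L) (hLinf : Infinite L) (hLcocompact : CompactSpace (G ⧸ L))
    (ψ : Lp ℂ 2 μ) (hψ : ψ ≠ 0) :
    Democratic (fun k : L => translateLp μ (k : G) ψ) ↔
      ∃ c C : ℝ, 0 < c ∧ 0 < C ∧ c ≤ C ∧ ∀ Γ : Finset L, Γ.Nonempty →
        c * Γ.card ≤ ‖∑ k ∈ Γ, translateLp μ (k : G) ψ‖ ^ 2 ∧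
        ‖∑ k ∈ Γ, translateLp μ (k : G) ψ‖ ^ 2 ≤ C * Γ.card := by
  classical
  haveI : SigmaCompactSpace G := sigmaCompact_of_cocompact L hLcount hLcocompact
  haveI : Nonempty L := inferInstance
  set T : L → Lp ℂ 2 μ := fun k => translateLp μ (k : G) ψ with hT
  have hψn : (0 : ℝ) < ‖ψ‖ := norm_pos_iff.2 hψ
  have hTn : ∀ k : L, ‖T k‖ = ‖ψ‖ := fun k => translateLp_norm μ _ _
  have hsum : ∀ Γ : Finset L, ∑ k ∈ Γ, ‖T k‖⁻¹ • T k = ‖ψ‖⁻¹ • ∑ k ∈ Γ, T k := by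
    intro Γ
    rw [Finset.smul_sum]
    exact Finset.sum_congr rfl fun k _ => by rw [hTn]
  have hnn : ∀ Γ : Finset L, ‖∑ k ∈ Γ, ‖T k‖⁻¹ • T k‖ = ‖ψ‖⁻¹ * ‖∑ k ∈ Γ, T k‖ := by
    intro Γ
    rw [hsum, norm_smul, norm_inv, norm_norm]
  constructor
  · rintro ⟨D, hD, hcomp⟩
    have hdem : ∀ Γ₁ Γ₂ : Finset L, Γ₁.card = Γ₂.card →
        ‖∑ k ∈ Γ₁, T k‖ ≤ D * ‖∑ k ∈ Γ₂, T k‖ := by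
      intro Γ₁ Γ₂ hcd
      have h := hcomp Γ₁ Γ₂ hcd
      rw [hnn, hnn] at h
      have h3 := mul_le_mul_of_nonneg_left h hψn.le
      rw [← mul_assoc, mul_inv_cancel₀ hψn.ne', one_mul] at h3
      calc ‖∑ k ∈ Γ₁, T k‖ ≤ ‖ψ‖ * (D * (‖ψ‖⁻¹ * ‖∑ k ∈ Γ₂, T k‖)) := h3
        _ = D * (‖ψ‖ * ‖ψ‖⁻¹ * ‖∑ k ∈ Γ₂, T k‖) := by ring
        _ = D * ‖∑ k ∈ Γ₂, T k‖ := by rw [mul_inv_cancel₀ hψn.ne', one_mul]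
    have hD1 : 1 ≤ D := by
      obtain ⟨k₀⟩ := (inferInstance : Nonempty L)
      have h := hdem {k₀} {k₀} rfl
      rw [Finset.sum_singleton] at h
      rw [hTn] at h
      nlinarith
    refine ⟨‖ψ‖ ^ 2 / (2 * D ^ 2), 3 / 2 * D ^ 2 * ‖ψ‖ ^ 2, by positivity, by positivity, ?_, ?_⟩
    · rw [div_le_iff₀ (by positivity)]
      have hD2 : 1 ≤ D ^ 2 := by nlinarith
      have h5 : ‖ψ‖ ^ 2 * 1 ≤ ‖ψ‖ ^ 2 * (D ^ 2 * D ^ 2) :=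
        mul_le_mul_of_nonneg_left (by nlinarith) (sq_nonneg _)
      nlinarith
    · intro Γ hΓne
      set m : ℕ := Γ.card with hm
      have hm1 : 1 ≤ (m : ℝ) := by
        have := Finset.card_pos.2 hΓne
        exact_mod_cast this
    -- almost orthogonal reference set
      have hεp : (0 : ℝ) < ‖ψ‖ ^ 2 / (2 * m) := by positivity
      obtain ⟨Γn, hΓncard, hΓnorth⟩ := exists_almost_orthogonal_translates μ L hLdisc hLclosed
        hLinf ψ hεp m
      have hbounds := norm_sum_sq_bounds Γn (fun k => T k) ‖ψ‖ (‖ψ‖ ^ 2 / (2 * m)) hεp.le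
        (fun k _ => hTn k) (fun k hk l hl hne => (hΓnorth k hk l hl hne).le)
      rw [hΓncard] at hbounds
      have hsq : (m : ℝ) ^ 2 * (‖ψ‖ ^ 2 / (2 * m)) = m * ‖ψ‖ ^ 2 / 2 := by
        field_simp
      rw [hsq] at hbounds
      obtain ⟨hlb, hub⟩ := hbounds
      have hSnl : (m : ℝ) * ‖ψ‖ ^ 2 / 2 ≤ ‖∑ k ∈ Γn, T k‖ ^ 2 := by linarith
      have hSnu : ‖∑ k ∈ Γn, T k‖ ^ 2 ≤ 3 / 2 * ((m : ℝ) * ‖ψ‖ ^ 2) := by linarith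
      have hle1 : ‖∑ k ∈ Γ, T k‖ ≤ D * ‖∑ k ∈ Γn, T k‖ := hdem Γ Γn (by rw [hΓncard])
      have hle2 : ‖∑ k ∈ Γn, T k‖ ≤ D * ‖∑ k ∈ Γ, T k‖ := hdem Γn Γ (by rw [hΓncard])
      constructor
      · -- lower bound
        rw [div_mul_eq_mul_div, div_le_iff₀ (by positivity)]
        have h4 : ‖∑ k ∈ Γn, T k‖ ^ 2 ≤ (D * ‖∑ k ∈ Γ, T k‖) ^ 2 :=
          pow_le_pow_left₀ (norm_nonneg _) hle2 2
        nlinarith [norm_nonneg (∑ k ∈ Γ, T k)]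
      · -- upper bound
        have h4 : ‖∑ k ∈ Γ, T k‖ ^ 2 ≤ D ^ 2 * ‖∑ k ∈ Γn, T k‖ ^ 2 := by
          rw [← mul_pow]
          exact pow_le_pow_left₀ (norm_nonneg _) hle1 2
        have h5 : D ^ 2 * ‖∑ k ∈ Γn, T k‖ ^ 2 ≤ D ^ 2 * (3 / 2 * ((m : ℝ) * ‖ψ‖ ^ 2)) :=
          mul_le_mul_of_nonneg_left hSnu (sq_nonneg D)
        nlinarith
  · rintro ⟨c, C, hc, hC, hcC, hΓ⟩
    refine ⟨Real.sqrt (C / c), Real.sqrt_pos.2 (by positivity), ?_⟩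
    intro Γ₁ Γ₂ hcd
    rw [hnn, hnn]
    rcases Finset.eq_empty_or_nonempty Γ₁ with h1 | h1
    · have h2 : Γ₂ = ∅ := by
        rw [h1] at hcd
        exact Finset.card_eq_zero.1 hcd.symm
      rw [h1, h2]
      simp only [Finset.sum_empty, norm_zero, mul_zero, le_refl]
    · have h2 : Γ₂.Nonempty := by
        rw [← Finset.card_pos, ← hcd, Finset.card_pos]
        exact h1
      obtain ⟨_, hub⟩ := hΓ Γ₁ h1
      obtain ⟨hlb, _⟩ := hΓ Γ₂ h2
      rw [← hcd] at hlb
      set a := ‖∑ k ∈ Γ₁, T k‖ with ha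
      set b := ‖∑ k ∈ Γ₂, T k‖ with hb
      have hD : (0 : ℝ) < Real.sqrt (C / c) := Real.sqrt_pos.2 (by positivity)
      have hDsq : Real.sqrt (C / c) ^ 2 = C / c := Real.sq_sqrt (by positivity)
      have h6 : 0 ≤ Real.sqrt (C / c) * b := mul_nonneg hD.le (by rw [hb]; exact norm_nonneg _)
      have key : a ≤ Real.sqrt (C / c) * b := by
        have h5 : a ^ 2 ≤ (Real.sqrt (C / c) * b) ^ 2 := by
          rw [mul_pow, hDsq]
          calc a ^ 2 ≤ C * Γ₁.card := hub
            _ = (C / c) * (c * Γ₁.card) := by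
                field_simp
            _ ≤ (C / c) * b ^ 2 := by
                refine mul_le_mul_of_nonneg_left hlb (by positivity)
        have h7 := Real.sqrt_le_sqrt h5
        rwa [Real.sqrt_sq (by rw [ha]; exact norm_nonneg _), Real.sqrt_sq h6] at h7
      calc ‖ψ‖⁻¹ * a ≤ ‖ψ‖⁻¹ * (Real.sqrt (C / c) * b) :=
            mul_le_mul_of_nonneg_left key (by positivity)
        _ = Real.sqrt (C / c) * (‖ψ‖⁻¹ * b) := by ring
end
end

section
/- For any finite system of vectors (f_k)_{k∈Γ} in a complex Banach space (X,‖·‖) and any coefficients (α_k)_{k∈Γ} with |α_k| ≤ 1 for each k ∈ Γ, one has ‖∑_{k∈Γ} α_k f_k‖ ≤ π · max_{Γ'⊆Γ} ‖∑_{k∈Γ'} f_k‖, where the maximum is taken over all subsets Γ' of Γ. -/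
open Finset

open Real MeasureTheory intervalIntegral in
private lemma reh' (t : ℝ) (z : ℂ) :
    (Complex.exp (t*Complex.I)*z).re = Real.cos t * z.re - Real.sin t * z.im := by
  simp [Complex.exp_mul_I, Complex.add_re, Complex.mul_re, Complex.mul_im,
    Complex.cos_ofReal_re, Complex.sin_ofReal_re]

open Real MeasureTheory intervalIntegral in
private lemma midint' (θ : ℝ) (z : ℂ) :
    ∫ t in (θ-π/2)..(θ+π/2), (Complex.exp (t*Complex.I)*z).re
      = 2 * (Complex.exp (θ*Complex.I)*z).re := by
  have h1 : IntervalIntegrable (fun t : ℝ => Real.cos t * z.re) volume (θ-π/2) (θ+π/2) :=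
    Continuous.intervalIntegrable (by fun_prop) _ _
  have h2 : IntervalIntegrable (fun t : ℝ => Real.sin t * z.im) volume (θ-π/2) (θ+π/2) :=
    Continuous.intervalIntegrable (by fun_prop) _ _
  simp only [reh']
  rw [intervalIntegral.integral_sub h1 h2,
    intervalIntegral.integral_mul_const, intervalIntegral.integral_mul_const,
    integral_cos, integral_sin]
  simp [Real.sin_add, Real.cos_add, Real.sin_sub, Real.cos_sub]
  ring

private noncomputable def Gaux (θ : ℝ) (z : ℂ) : ℝ → ℝ :=
  Set.indicator {t | 0 < Real.cos (t - θ)} (fun t => (Complex.exp (t*Complex.I)*z).re)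

private lemma cont_re' (z : ℂ) :
    Continuous (fun t : ℝ => (Complex.exp (t*Complex.I)*z).re) := by fun_prop

open Real MeasureTheory intervalIntegral in
private lemma Gaux_int (θ : ℝ) (z : ℂ) (a b : ℝ) :
    IntervalIntegrable (Gaux θ z) volume a b := by
  rw [intervalIntegrable_iff]
  exact ((Continuous.intervalIntegrable (cont_re' z) a b).def').indicator
    ((isOpen_lt continuous_const (by fun_prop)).measurableSet)

open Real MeasureTheory intervalIntegral in
private lemma Gaux_periodic (θ : ℝ) (z : ℂ) : Function.Periodic (Gaux θ z) (2*π) := by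
  intro t
  have hcos : Real.cos (t + 2*π - θ) = Real.cos (t - θ) := by
    rw [show t + 2*π - θ = (t - θ) + 2*π by ring, Real.cos_add_two_pi]
  have hexp : Complex.exp ((t + 2*π : ℝ)*Complex.I) = Complex.exp (t*Complex.I) := by
    push_cast
    rw [add_mul, Complex.exp_add, Complex.exp_two_pi_mul_I, mul_one]
  unfold Gaux
  simp only [Set.indicator_apply, Set.mem_setOf_eq]
  simp only [hcos, hexp]

open Real MeasureTheory intervalIntegral in
private lemma Gaux_integral (θ : ℝ) (z : ℂ) :
    ∫ t in (0:ℝ)..(2*π), Gaux θ z t = 2 * (Complex.exp (θ*Complex.I)*z).re := by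
  have hper := (Gaux_periodic θ z).intervalIntegral_add_eq 0 (θ - π)
  rw [zero_add] at hper
  rw [hper, show θ - π + 2*π = θ + π by ring]
  rw [← intervalIntegral.integral_add_adjacent_intervals (b := θ - π/2)
        (Gaux_int θ z _ _) (Gaux_int θ z _ _),
      ← intervalIntegral.integral_add_adjacent_intervals (a := θ - π/2) (b := θ + π/2)
        (Gaux_int θ z _ _) (Gaux_int θ z _ _)]
  have hz1 : ∫ t in (θ-π)..(θ-π/2), Gaux θ z t = 0 := by
    rw [intervalIntegral.integral_congr (g := fun _ => 0) ?_, intervalIntegral.integral_zero]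
    intro t ht
    rw [Set.uIcc_of_le (by linarith [pi_pos])] at ht
    simp only [Set.mem_Icc] at ht
    have h1 : Real.cos (t - θ) ≤ 0 := by
      rw [← neg_sub, Real.cos_neg]
      apply Real.cos_nonpos_of_pi_div_two_le_of_le
      · linarith [ht.2]
      · linarith [ht.1]
    exact Set.indicator_of_notMem (by simp [not_lt.mpr h1]) _
  have hz3 : ∫ t in (θ+π/2)..(θ+π), Gaux θ z t = 0 := by
    rw [intervalIntegral.integral_congr (g := fun _ => 0) ?_, intervalIntegral.integral_zero]
    intro t ht
    rw [Set.uIcc_of_le (by linarith [pi_pos])] at ht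
    simp only [Set.mem_Icc] at ht
    have h1 : Real.cos (t - θ) ≤ 0 := by
      apply Real.cos_nonpos_of_pi_div_two_le_of_le
      · linarith [ht.1]
      · linarith [ht.2]
    exact Set.indicator_of_notMem (by simp [not_lt.mpr h1]) _
  have hmid : ∫ t in (θ-π/2)..(θ+π/2), Gaux θ z t
      = 2 * (Complex.exp (θ*Complex.I)*z).re := by
    rw [← midint' θ z]
    apply intervalIntegral.integral_congr_ae
    have hnull : (volume : Measure ℝ) {θ + π/2} = 0 := measure_singleton _
    filter_upwards [compl_mem_ae_iff.mpr hnull] with t hts ht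
    rw [Set.uIoc_of_le (by linarith [pi_pos])] at ht
    simp only [Set.mem_Ioc] at ht
    have htne : t ≠ θ + π/2 := by simpa using hts
    have hlt : t < θ + π/2 := lt_of_le_of_ne ht.2 htne
    have h1 : 0 < Real.cos (t - θ) :=
      Real.cos_pos_of_mem_Ioo ⟨by linarith [ht.1], by linarith⟩
    exact Set.indicator_of_mem (by simpa using h1) _
  rw [hz1, hz3, hmid]; ring

open Real MeasureTheory intervalIntegral in
private lemma scalar_key {ι : Type*} (Γ : Finset ι) (z : ι → ℂ) (α : ι → ℂ)
    (hα : ∀ k ∈ Γ, ‖α k‖ ≤ 1) (M : ℝ)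
    (hM : ∀ Γ' ⊆ Γ, ‖∑ k ∈ Γ', z k‖ ≤ M) :
    ∑ k ∈ Γ, (α k * z k).re ≤ π * M := by
  classical
  set g : ι → ℝ → ℝ := fun k t => ‖α k‖ * Gaux (Complex.arg (α k)) (z k) t with hg
  have hg_int : ∀ k ∈ Γ, IntervalIntegrable (g k) volume 0 (2*π) := fun k _ =>
    (Gaux_int _ _ _ _).const_mul _
  have hkey : ∀ k ∈ Γ, ∫ t in (0:ℝ)..(2*π), g k t = 2 * (α k * z k).re := by
    intro k _
    have : ∫ t in (0:ℝ)..(2*π), g k t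
        = ‖α k‖ * ∫ t in (0:ℝ)..(2*π), Gaux (Complex.arg (α k)) (z k) t :=
      intervalIntegral.integral_const_mul _ _
    rw [this, Gaux_integral]
    have hαk : (‖α k‖ : ℂ) * Complex.exp ((Complex.arg (α k) : ℂ) * Complex.I) = α k := by
      exact Complex.norm_mul_exp_arg_mul_I _
    calc ‖α k‖ * (2 * (Complex.exp ((Complex.arg (α k) : ℂ) * Complex.I) * z k).re)
        = 2 * (((‖α k‖ : ℂ)) * (Complex.exp ((Complex.arg (α k) : ℂ) * Complex.I) * z k)).re := by
          rw [Complex.re_ofReal_mul]; ring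
      _ = 2 * (α k * z k).re := by rw [← mul_assoc, hαk]
  have hbound : ∀ t ∈ Set.Icc (0:ℝ) (2*π), ∑ k ∈ Γ, g k t ≤ M := by
    intro t _
    set P : ι → Prop := fun k => 0 < (Complex.exp ((t:ℂ)*Complex.I) * z k).re with hP
    have step1 : ∑ k ∈ Γ, g k t
        ≤ ∑ k ∈ Γ, (if P k then (Complex.exp ((t:ℂ)*Complex.I) * z k).re else 0) := by
      apply Finset.sum_le_sum
      intro k hk
      by_cases hmem : t ∈ {s | 0 < Real.cos (s - Complex.arg (α k))}
      · rw [hg]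
        simp only [Gaux, Set.indicator_of_mem hmem]
        by_cases hPk : P k
        · rw [if_pos hPk]
          exact mul_le_of_le_one_left (le_of_lt hPk) (hα k hk)
        · rw [if_neg hPk]
          have h1 : (Complex.exp ((t:ℂ)*Complex.I) * z k).re ≤ 0 := not_lt.mp hPk
          nlinarith [norm_nonneg (α k)]
      · rw [hg]
        simp only [Gaux, Set.indicator_of_notMem hmem, mul_zero]
        by_cases hPk : P k
        · rw [if_pos hPk]; exact le_of_lt hPk
        · rw [if_neg hPk]
      
    have step2 : ∑ k ∈ Γ, (if P k then (Complex.exp ((t:ℂ)*Complex.I) * z k).re else 0)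
        = (Complex.exp ((t:ℂ)*Complex.I) * ∑ k ∈ Γ.filter P, z k).re := by
      rw [Finset.mul_sum, Complex.re_sum, Finset.sum_filter]
    have step3 : (Complex.exp ((t:ℂ)*Complex.I) * ∑ k ∈ Γ.filter P, z k).re ≤ M := by
      calc (Complex.exp ((t:ℂ)*Complex.I) * ∑ k ∈ Γ.filter P, z k).re
          ≤ ‖Complex.exp ((t:ℂ)*Complex.I) * ∑ k ∈ Γ.filter P, z k‖ := Complex.re_le_norm _
        _ = ‖∑ k ∈ Γ.filter P, z k‖ := by
            rw [norm_mul,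
              Complex.norm_exp_ofReal_mul_I, one_mul]
        _ ≤ M := hM _ (Finset.filter_subset _ _)
    linarith [step1, step2 ▸ step3]
  have hsum_int : (2:ℝ) * ∑ k ∈ Γ, (α k * z k).re = ∫ t in (0:ℝ)..(2*π), ∑ k ∈ Γ, g k t := by
    rw [intervalIntegral.integral_finset_sum hg_int, Finset.mul_sum]
    exact Finset.sum_congr rfl fun k hk => (hkey k hk).symm
  have hInt : IntervalIntegrable (fun t => ∑ k ∈ Γ, g k t) volume 0 (2*π) := by
    have h := IntervalIntegrable.sum Γ hg_int
    have he : (∑ i ∈ Γ, g i) = fun t => ∑ k ∈ Γ, g k t := by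
      funext t; simp [Finset.sum_apply]
    rwa [he] at h
  have hmono : ∫ t in (0:ℝ)..(2*π), ∑ k ∈ Γ, g k t ≤ ∫ _ in (0:ℝ)..(2*π), M :=
    intervalIntegral.integral_mono_on (by positivity) hInt intervalIntegrable_const hbound
  have hconst : ∫ _ in (0:ℝ)..(2*π), M = 2*π*M := by
    rw [intervalIntegral.integral_const, smul_eq_mul]; ring
  nlinarith [hsum_int, hmono, hconst]

/-- For any finite system of vectors `(f_k)_{k∈Γ}` in a complex Banach space and any coefficients
`(α_k)_{k∈Γ}` with `|α_k| ≤ 1`, one has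
`‖∑_{k∈Γ} α_k f_k‖ ≤ π · max_{Γ' ⊆ Γ} ‖∑_{k∈Γ'} f_k‖`. -/
theorem norm_sum_smul_le_pi_mul_max_norm_sum_subset
    {X : Type*} [NormedAddCommGroup X] [NormedSpace ℂ X] [CompleteSpace X]
    {ι : Type*} (Γ : Finset ι) (f : ι → X) (α : ι → ℂ) (hα : ∀ k ∈ Γ, ‖α k‖ ≤ 1) :
    ‖∑ k ∈ Γ, α k • f k‖ ≤
      Real.pi * Γ.powerset.sup' (Finset.powerset_nonempty Γ) (fun Γ' => ‖∑ k ∈ Γ', f k‖) := by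
  classical
  set M := Γ.powerset.sup' (Finset.powerset_nonempty Γ) (fun Γ' => ‖∑ k ∈ Γ', f k‖) with hMdef
  have hM0 : 0 ≤ M := by
    calc (0:ℝ) = ‖∑ k ∈ (∅ : Finset ι), f k‖ := by simp
      _ ≤ M := Finset.le_sup' (f := fun Γ' => ‖∑ k ∈ Γ', f k‖)
          (Finset.mem_powerset.mpr (Finset.empty_subset Γ))
  by_cases hS : ∑ k ∈ Γ, α k • f k = 0
  · rw [hS, norm_zero]
    exact mul_nonneg Real.pi_pos.le hM0
  · obtain ⟨g, hg1, hgS⟩ := exists_dual_vector ℂ _ (norm_ne_zero_iff.mpr hS)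
    set z : ι → ℂ := fun k => g (f k) with hz
    have hMle : ∀ Γ' ⊆ Γ, ‖∑ k ∈ Γ', z k‖ ≤ M := by
      intro Γ' hΓ'
      have h1 : ∑ k ∈ Γ', z k = g (∑ k ∈ Γ', f k) := (map_sum g f Γ').symm
      calc ‖∑ k ∈ Γ', z k‖ = ‖g (∑ k ∈ Γ', f k)‖ := by rw [h1]
        _ ≤ ‖g‖ * ‖∑ k ∈ Γ', f k‖ := g.le_opNorm _
        _ = ‖∑ k ∈ Γ', f k‖ := by rw [hg1, one_mul]
        _ ≤ M := Finset.le_sup' (f := fun Γ' => ‖∑ k ∈ Γ', f k‖)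
              (Finset.mem_powerset.mpr hΓ')
    have hgsum : g (∑ k ∈ Γ, α k • f k) = ∑ k ∈ Γ, α k * z k := by
      rw [map_sum]
      exact Finset.sum_congr rfl fun k _ => by rw [map_smul, smul_eq_mul]
    have hnorm : ‖∑ k ∈ Γ, α k • f k‖ = (∑ k ∈ Γ, α k * z k).re := by
      rw [← hgsum, hgS]
      exact (Complex.ofReal_re _).symm
    rw [hnorm, Complex.re_sum]
    exact scalar_key Γ z α hα M hMle
end

section
/- For any finite system of vectors (f_k)_{k∈Γ} in a complex Banach space X and any continuous linear functional φ ∈ X*, one has ∑_{k∈Γ} |φ(f_k)| ≤ π · max_{Γ'⊆Γ} |φ(∑_{k∈Γ'} f_k)|, where the maximum is taken over all subsets Γ' of Γ. -/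
open Finset Real intervalIntegral

lemma posCos_integral : ∫ θ in (-(π/2))..(3*π/2), max 0 (Real.cos θ) = 2 := by
  have h1 : ∫ θ in (-(π/2))..(π/2), max 0 (Real.cos θ) = 2 := by
    rw [integral_congr (g := Real.cos)]
    · rw [integral_cos]; simp; norm_num
    · intro x hx
      rw [Set.uIcc_of_le (by linarith [Real.pi_pos]) ] at hx
      exact max_eq_right (Real.cos_nonneg_of_mem_Icc ⟨hx.1, hx.2⟩)
  have h2 : ∫ θ in (π/2)..(3*π/2), max 0 (Real.cos θ) = 0 := by
    rw [integral_congr (g := fun _ => 0)]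
    · simp
    · intro x hx
      rw [Set.uIcc_of_le (by linarith [Real.pi_pos])] at hx
      exact max_eq_left (Real.cos_nonpos_of_pi_div_two_le_of_le hx.1 (by linarith [hx.2]))
  have hint : ∀ a b : ℝ, IntervalIntegrable (fun θ => max 0 (Real.cos θ)) MeasureTheory.volume a b :=
    fun a b => (Continuous.max continuous_const Real.continuous_cos).intervalIntegrable a b
  rw [← integral_add_adjacent_intervals (hint _ (π/2)) (hint _ _), h1, h2, add_zero]

lemma posCos_shift (c : ℝ) : ∫ θ in (0:ℝ)..(2*π), max 0 (Real.cos (c - θ)) = 2 := by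
  rw [intervalIntegral.integral_comp_sub_left (fun u => max 0 (Real.cos u)) c]
  have hper : Function.Periodic (fun u => max 0 (Real.cos u)) (2*π) := fun x => by
    simp [Real.cos_add_two_pi]
  have := hper.intervalIntegral_add_eq (c - 2*π) (-(π/2))
  simp only [sub_add_cancel] at this
  rw [show c - 0 = c by ring, this, show -(π/2) + 2*π = 3*π/2 by ring, posCos_integral]

lemma posRe_integral (z : ℂ) :
    ∫ θ in (0:ℝ)..(2*π), max 0 ((Complex.exp (-(θ:ℂ) * Complex.I) * z).re)
      = 2 * ‖z‖ := by
  rcases eq_or_ne z 0 with rfl | hz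
  · simp
  · have hre : ∀ θ : ℝ, (Complex.exp (-(θ:ℂ) * Complex.I) * z).re
        = ‖z‖ * Real.cos (Complex.arg z - θ) := by
      intro θ
      nth_rewrite 1 [← Complex.norm_mul_exp_arg_mul_I z]
      rw [mul_comm (Complex.exp _), mul_assoc, ← Complex.exp_add,
        show (Complex.arg z : ℂ) * Complex.I + -(θ:ℂ) * Complex.I
          = ((Complex.arg z - θ : ℝ) : ℂ) * Complex.I by push_cast; ring,
        Complex.re_ofReal_mul, Complex.exp_ofReal_mul_I_re]
    have : ∀ θ : ℝ, max 0 ((Complex.exp (-(θ:ℂ) * Complex.I) * z).re)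
        = ‖z‖ * max 0 (Real.cos (Complex.arg z - θ)) := by
      intro θ
      rw [hre θ, mul_max_of_nonneg _ _ (norm_nonneg z), mul_zero]
    simp_rw [this]
    rw [intervalIntegral.integral_const_mul, posCos_shift, mul_comm]

/-- For any finite system of vectors `(f_k)_{k∈Γ}` in a complex Banach space and any continuous
linear functional `φ ∈ X*`, one has
`∑_{k∈Γ} |φ(f_k)| ≤ π · max_{Γ'⊆Γ} |φ(∑_{k∈Γ'} f_k)|`. -/
theorem sum_norm_apply_le_pi_mul_max_norm_apply_sum_subset
    {X : Type*} [NormedAddCommGroup X] [NormedSpace ℂ X] [CompleteSpace X]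
    {ι : Type*} (Γ : Finset ι) (f : ι → X) (φ : X →L[ℂ] ℂ) :
    ∑ k ∈ Γ, ‖φ (f k)‖ ≤
      Real.pi * Γ.powerset.sup' (Finset.powerset_nonempty Γ)
        (fun Γ' => ‖φ (∑ k ∈ Γ', f k)‖) := by
  classical
  set M := Γ.powerset.sup' (Finset.powerset_nonempty Γ)
        (fun Γ' => ‖φ (∑ k ∈ Γ', f k)‖) with hM
  -- pointwise bound
  have key : ∀ θ : ℝ, ∑ k ∈ Γ, max 0 ((Complex.exp (-(θ:ℂ) * Complex.I) * φ (f k)).re) ≤ M := by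
    intro θ
    set T := Γ.filter (fun k => 0 < (Complex.exp (-(θ:ℂ) * Complex.I) * φ (f k)).re) with hT
    have h1 : ∑ k ∈ Γ, max 0 ((Complex.exp (-(θ:ℂ) * Complex.I) * φ (f k)).re)
        = ∑ k ∈ T, (Complex.exp (-(θ:ℂ) * Complex.I) * φ (f k)).re := by
      rw [hT, Finset.sum_filter]
      refine Finset.sum_congr rfl fun k _ => ?_
      rcases lt_or_ge 0 ((Complex.exp (-(θ:ℂ) * Complex.I) * φ (f k)).re) with h | h
      · rw [if_pos h, max_eq_right h.le]
      · rw [if_neg (not_lt.mpr h), max_eq_left h]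
    have h2 : ∑ k ∈ T, (Complex.exp (-(θ:ℂ) * Complex.I) * φ (f k)).re
        = (Complex.exp (-(θ:ℂ) * Complex.I) * φ (∑ k ∈ T, f k)).re := by
      rw [map_sum, Finset.mul_sum, Complex.re_sum]
    have h3 : (Complex.exp (-(θ:ℂ) * Complex.I) * φ (∑ k ∈ T, f k)).re
        ≤ ‖φ (∑ k ∈ T, f k)‖ := by
      calc (Complex.exp (-(θ:ℂ) * Complex.I) * φ (∑ k ∈ T, f k)).re
          ≤ ‖Complex.exp (-(θ:ℂ) * Complex.I) * φ (∑ k ∈ T, f k)‖ :=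
            Complex.re_le_norm _
        _ = ‖φ (∑ k ∈ T, f k)‖ := by
            rw [norm_mul, Complex.norm_exp]
            simp
    have h4 : ‖φ (∑ k ∈ T, f k)‖ ≤ M :=
      Finset.le_sup' (fun Γ' => ‖φ (∑ k ∈ Γ', f k)‖)
        (Finset.mem_powerset.mpr (Finset.filter_subset _ _))
    linarith [h1, h2, h3, h4]
  have hMnonneg : 0 ≤ M :=
    le_trans (norm_nonneg _) (Finset.le_sup' (fun Γ' => ‖φ (∑ k ∈ Γ', f k)‖)
      (Finset.mem_powerset.mpr (Finset.empty_subset Γ)))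
  have hcont : ∀ k : ι, Continuous fun θ : ℝ =>
      max 0 ((Complex.exp (-(θ:ℂ) * Complex.I) * φ (f k)).re) := by
    intro k
    fun_prop
  have hint : ∀ k ∈ Γ, IntervalIntegrable
      (fun θ : ℝ => max 0 ((Complex.exp (-(θ:ℂ) * Complex.I) * φ (f k)).re))
      MeasureTheory.volume 0 (2*π) := fun k _ => (hcont k).intervalIntegrable _ _
  have hsum : (2:ℝ) * ∑ k ∈ Γ, ‖φ (f k)‖
      = ∫ θ in (0:ℝ)..(2*π), ∑ k ∈ Γ, max 0 ((Complex.exp (-(θ:ℂ) * Complex.I) * φ (f k)).re) := by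
    rw [intervalIntegral.integral_finset_sum hint]
    simp_rw [posRe_integral, Finset.mul_sum]
  have hbound : (∫ θ in (0:ℝ)..(2*π), ∑ k ∈ Γ, max 0 ((Complex.exp (-(θ:ℂ) * Complex.I) * φ (f k)).re))
      ≤ ∫ _ in (0:ℝ)..(2*π), M := by
    apply intervalIntegral.integral_mono_on (by positivity)
      ((continuous_finset_sum Γ fun k _ => hcont k).intervalIntegrable _ _) intervalIntegrable_const
    intro θ _
    exact key θ
  rw [intervalIntegral.integral_const, smul_eq_mul] at hbound
  nlinarith [Real.pi_pos, hsum, hbound]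
end

section
/- For every positive integer n, with Γ = {0,1,…,2n−1} and f_k = e^{πik/n} ∈ ℂ, the maximum over all subsets Γ' ⊆ Γ of |∑_{k∈Γ'} f_k| equals 1/sin(π/(2n)), and with α_k = e^{−πik/n} one has |∑_{k=0}^{2n−1} α_k f_k| = 2n; consequently the ratio (1/sin(π/(2n)))/(2n) converges to 1/π as n → ∞, so the constant π in the selection inequality ‖∑ α_k f_k‖ ≤ π·max_{Γ'⊆Γ}‖∑_{k∈Γ'} f_k‖ is optimal already in X = ℂ. -/
open Finset Filter
open Complex

lemma norm_one_sub_exp (θ : ℝ) (h0 : 0 ≤ θ) (h1 : θ ≤ 2*Real.pi) :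
    ‖1 - Complex.exp (θ * I)‖ = 2 * Real.sin (θ/2) := by
  have h2 : ‖1 - Complex.exp (θ * I)‖ = Real.sqrt (2 - 2*Real.cos θ) := by
    rw [Complex.norm_def, Complex.normSq_apply]
    congr 1
    simp [Complex.exp_ofReal_mul_I_re, Complex.exp_ofReal_mul_I_im]
    nlinarith [Real.sin_sq_add_cos_sq θ]
  rw [h2, Real.sin_half_eq_sqrt h0 h1]
  rw [show (2 - 2*Real.cos θ) = 4 * ((1-Real.cos θ)/2) by ring, Real.sqrt_mul (by norm_num)]
  rw [show (4:ℝ) = 2^2 by norm_num, Real.sqrt_sq (by norm_num : (0:ℝ) ≤ 2)]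

lemma sin_pos_aux {n : ℕ} (hn : 0 < n) : 0 < Real.sin (Real.pi / (2*n)) := by
  apply Real.sin_pos_of_pos_of_lt_pi
  · positivity
  · rw [div_lt_iff₀ (by positivity)]
    nlinarith [Real.pi_pos, Nat.one_le_cast (α := ℝ) |>.mpr hn]

lemma lemA {n : ℕ} (hn : 0 < n) :
    ‖∑ k ∈ Finset.range n, Complex.exp (((Real.pi * k / n : ℝ) : ℂ) * I)‖
      = 1 / Real.sin (Real.pi / (2*n)) := by
  have hn' : (n:ℝ) ≠ 0 := Nat.cast_ne_zero.mpr hn.ne'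
  set z : ℂ := Complex.exp (((Real.pi / n : ℝ) : ℂ) * I) with hz
  have hterm : ∀ k : ℕ, Complex.exp (((Real.pi * k / n : ℝ) : ℂ) * I) = z ^ k := by
    intro k
    rw [hz, ← Complex.exp_nat_mul]
    congr 1
    push_cast
    field_simp
  have hnorm1z : ‖1 - z‖ = 2 * Real.sin (Real.pi / (2*n)) := by
    have h0 : 0 ≤ Real.pi / n := by positivity
    have h1 : Real.pi / n ≤ 2 * Real.pi := by
      rw [div_le_iff₀ (by positivity)]
      nlinarith [Real.pi_pos, Nat.one_le_cast (α := ℝ) |>.mpr hn]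
    have := norm_one_sub_exp (Real.pi / n) h0 h1
    rwa [show Real.pi / n / 2 = Real.pi / (2*n) by ring] at this
  have hs := sin_pos_aux hn
  have hz1 : z ≠ 1 := by
    intro h
    rw [h] at hnorm1z
    simp at hnorm1z
    linarith
  have hzn : z ^ n = -1 := by
    rw [hz, ← Complex.exp_nat_mul, ← Complex.exp_pi_mul_I]
    congr 1
    push_cast
    have : ((n:ℂ)) ≠ 0 := Nat.cast_ne_zero.mpr hn.ne'
    field_simp
  calc ‖∑ k ∈ Finset.range n, Complex.exp (((Real.pi * k / n : ℝ) : ℂ) * I)‖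
      = ‖∑ k ∈ Finset.range n, z ^ k‖ := by simp_rw [hterm]
    _ = ‖(z ^ n - 1) / (z - 1)‖ := by rw [geom_sum_eq hz1]
    _ = ‖z ^ n - 1‖ / ‖z - 1‖ := by rw [norm_div]
    _ = 2 / (2 * Real.sin (Real.pi / (2*n))) := by
        rw [hzn, show (-1 - (1:ℂ)) = -2 by ring, norm_sub_rev z 1, hnorm1z]
        norm_num
    _ = 1 / Real.sin (Real.pi / (2*n)) := by
        rw [div_eq_div_iff (by positivity) (by positivity)]
        ring

lemma lemC2sum {n : ℕ} (hn : 0 < n) (θ : ℝ) :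
    ∑ k ∈ Finset.range n, Real.cos (θ + Real.pi * k / n)
      ≤ 1 / Real.sin (Real.pi / (2*n)) := by
  have h1 : ∑ k ∈ Finset.range n, Real.cos (θ + Real.pi * k / n)
      = (Complex.exp ((θ:ℂ)*I) * ∑ k ∈ Finset.range n,
          Complex.exp (((Real.pi * k / n : ℝ) : ℂ) * I)).re := by
    rw [Finset.mul_sum, Complex.re_sum]
    refine Finset.sum_congr rfl (fun k _ => ?_)
    rw [← Complex.exp_add,
      show (θ:ℂ)*I + ((Real.pi * k / n : ℝ):ℂ)*I = ((θ + Real.pi * k / n : ℝ):ℂ)*I by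
        push_cast; ring,
      Complex.exp_ofReal_mul_I_re]
  rw [h1]
  calc (Complex.exp ((θ:ℂ)*I) * ∑ k ∈ Finset.range n,
          Complex.exp (((Real.pi * k / n : ℝ) : ℂ) * I)).re
      ≤ ‖Complex.exp ((θ:ℂ)*I) * ∑ k ∈ Finset.range n,
          Complex.exp (((Real.pi * k / n : ℝ) : ℂ) * I)‖ := Complex.re_le_norm _
    _ = ‖Complex.exp ((θ:ℂ)*I)‖ * ‖∑ k ∈ Finset.range n,
          Complex.exp (((Real.pi * k / n : ℝ) : ℂ) * I)‖ := norm_mul _ _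
    _ = 1 / Real.sin (Real.pi / (2*n)) := by
        rw [Complex.norm_exp_ofReal_mul_I, lemA hn, one_mul]

lemma lemC {n : ℕ} (hn : 0 < n) (θ : ℝ) :
    ∑ k ∈ Finset.range (2*n), max (Real.cos (θ + Real.pi * k / n)) 0
      ≤ 1 / Real.sin (Real.pi / (2*n)) := by
  have hn' : (0:ℝ) < n := Nat.cast_pos.mpr hn
  have hpi := Real.pi_pos
  set F : ℝ → ℝ := fun x => ∑ k ∈ Finset.range (2*n), max (Real.cos (x + Real.pi * k / n)) 0
    with hF
  have hper : Function.Periodic F (Real.pi / n) := by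
    intro x
    set g : ℕ → ℝ := fun k => max (Real.cos (x + Real.pi * k / n)) 0 with hg
    have h1 : F (x + Real.pi / n) = ∑ k ∈ Finset.range (2*n), g (k+1) := by
      refine Finset.sum_congr rfl (fun k _ => ?_)
      rw [hg]
      congr 2
      push_cast
      field_simp
      ring
    have h2 := Finset.sum_range_succ' g (2*n)
    rw [Finset.sum_range_succ] at h2
    have hg0 : g (2*n) = g 0 := by
      have heq : x + Real.pi * ((2*n : ℕ):ℝ) / n = (x + Real.pi * ((0:ℕ):ℝ) / n) + 2 * Real.pi := by
        push_cast; field_simp; ring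
      simp only [hg]
      rw [heq, Real.cos_add_two_pi]
    rw [h1, hF]
    linarith
  -- reduce to base interval
  set c : ℝ := Real.pi / n with hc
  have hcpos : 0 < c := by positivity
  set m : ℤ := ⌊(θ + Real.pi/2)/c⌋ with hm
  set θ' : ℝ := θ - m * c with hθ'
  have hfl1 : (m:ℝ) * c ≤ θ + Real.pi/2 := by
    rw [hm]
    calc (⌊(θ + Real.pi/2)/c⌋ : ℝ) * c ≤ ((θ + Real.pi/2)/c) * c :=
          mul_le_mul_of_nonneg_right (Int.floor_le _) hcpos.le
      _ = θ + Real.pi/2 := by rw [div_mul_cancel₀ _ hcpos.ne']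
  have hfl2 : θ + Real.pi/2 < (m:ℝ) * c + c := by
    have h := Int.lt_floor_add_one ((θ + Real.pi/2)/c)
    rw [div_lt_iff₀ hcpos] at h
    rw [hm]; linarith
  have hθ'lb : -(Real.pi/2) ≤ θ' := by rw [hθ']; linarith
  have hθ'ub : θ' < -(Real.pi/2) + c := by rw [hθ']; linarith
  have hFθ : F θ = F θ' := (hper.sub_int_mul_eq m).symm
  have hstep : (∑ k ∈ Finset.range (2*n), max (Real.cos (θ + Real.pi * k / n)) 0)
      = ∑ k ∈ Finset.range (2*n), max (Real.cos (θ' + Real.pi * k / n)) 0 := hFθ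
  rw [hstep, two_mul, Finset.sum_range_add]
  have hsecond : ∀ i ∈ Finset.range n,
      max (Real.cos (θ' + Real.pi * (n + i : ℕ) / n)) 0 = 0 := by
    intro i hi
    rw [Finset.mem_range] at hi
    have hi' : (i:ℝ) ≤ (n:ℝ) - 1 := by
      have h1 : ((i+1 : ℕ):ℝ) ≤ ((n:ℕ):ℝ) := Nat.cast_le.mpr hi
      push_cast at h1; linarith
    apply max_eq_right
    apply Real.cos_nonpos_of_pi_div_two_le_of_le
    · push_cast
      rw [show Real.pi * ((n:ℝ) + i) / n = Real.pi + Real.pi * i / n by field_simp]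
      have : 0 ≤ Real.pi * i / n := by positivity
      linarith
    · push_cast
      rw [show Real.pi * ((n:ℝ) + i) / n = Real.pi + Real.pi * i / n by field_simp]
      have : Real.pi * i / n ≤ Real.pi - Real.pi / n := by
        rw [div_le_iff₀ hn']
        have hxx : (Real.pi / n) * n = Real.pi := div_mul_cancel₀ _ hn'.ne'
        nlinarith [mul_le_mul_of_nonneg_left hi' hpi.le]
      rw [hc] at hθ'ub
      linarith
  rw [Finset.sum_congr rfl hsecond, Finset.sum_const, smul_zero, add_zero]
  have hfirst : ∀ k ∈ Finset.range n,
      max (Real.cos (θ' + Real.pi * k / n)) 0 = Real.cos (θ' + Real.pi * k / n) := by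
    intro k hk
    rw [Finset.mem_range] at hk
    have hk' : (k:ℝ) ≤ (n:ℝ) - 1 := by
      have h1 : ((k+1 : ℕ):ℝ) ≤ ((n:ℕ):ℝ) := Nat.cast_le.mpr hk
      push_cast at h1; linarith
    apply max_eq_left
    apply Real.cos_nonneg_of_neg_pi_div_two_le_of_le
    · have : 0 ≤ Real.pi * k / n := by positivity
      linarith
    · have : Real.pi * k / n ≤ Real.pi - Real.pi / n := by
        rw [div_le_iff₀ hn']
        have hxx : (Real.pi / n) * n = Real.pi := div_mul_cancel₀ _ hn'.ne'
        nlinarith [mul_le_mul_of_nonneg_left hk' hpi.le]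
      rw [hc] at hθ'ub
      linarith
  rw [Finset.sum_congr rfl hfirst]
  exact lemC2sum hn θ'

lemma lemB {n : ℕ} (hn : 0 < n) (Γ' : Finset ℕ) (hΓ : Γ' ⊆ Finset.range (2*n)) :
    ‖∑ k ∈ Γ', Complex.exp (((Real.pi * k / n : ℝ) : ℂ) * I)‖
      ≤ 1 / Real.sin (Real.pi / (2*n)) := by
  set S := ∑ k ∈ Γ', Complex.exp (((Real.pi * k / n : ℝ) : ℂ) * I) with hS
  set φ : ℝ := S.arg with hφ
  have hkey : Complex.exp (((-φ : ℝ):ℂ) * I) * S = (‖S‖ : ℂ) := by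
    conv_lhs => rw [← Complex.norm_mul_exp_arg_mul_I S]
    rw [mul_comm ((‖S‖ : ℂ)) _, ← mul_assoc, ← Complex.exp_add,
      show ((-φ : ℝ):ℂ) * I + (S.arg:ℂ) * I = 0 by rw [hφ]; push_cast; ring,
      Complex.exp_zero, one_mul]
  have hnorm : ‖S‖ = ∑ k ∈ Γ', Real.cos (-φ + Real.pi * k / n) := by
    have h1 : ‖S‖ = (Complex.exp (((-φ : ℝ):ℂ) * I) * S).re := by
      rw [hkey, Complex.ofReal_re]
    rw [h1, hS, Finset.mul_sum, Complex.re_sum]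
    refine Finset.sum_congr rfl (fun k _ => ?_)
    rw [← Complex.exp_add,
      show ((-φ:ℝ):ℂ)*I + ((Real.pi * k / n : ℝ):ℂ)*I = ((-φ + Real.pi * k / n : ℝ):ℂ)*I by
        push_cast; ring,
      Complex.exp_ofReal_mul_I_re]
  rw [hnorm]
  calc ∑ k ∈ Γ', Real.cos (-φ + Real.pi * k / n)
      ≤ ∑ k ∈ Γ', max (Real.cos (-φ + Real.pi * k / n)) 0 :=
        Finset.sum_le_sum (fun k _ => le_max_left _ _)
    _ ≤ ∑ k ∈ Finset.range (2*n), max (Real.cos (-φ + Real.pi * k / n)) 0 :=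
        Finset.sum_le_sum_of_subset_of_nonneg hΓ (fun k _ _ => le_max_right _ _)
    _ ≤ 1 / Real.sin (Real.pi / (2*n)) := lemC hn (-φ)


/-- Optimality of the constant `π` in the selection inequality, already in `X = ℂ`:
for `Γ = {0,…,2n−1}`, `f_k = e^{πik/n}` and `α_k = e^{−πik/n}`, the maximum of `|∑_{k∈Γ'} f_k|`
over subsets `Γ' ⊆ Γ` equals `1/sin(π/(2n))`, while `|∑_k α_k f_k| = 2n`; the ratio
`(1/sin(π/(2n)))/(2n)` converges to `1/π`, hence no constant smaller than `π` works. -/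
theorem pi_optimal_in_selection_inequality :
    (∀ n : ℕ, 0 < n →
      ((Finset.range (2 * n)).powerset.sup' (Finset.powerset_nonempty _)
          (fun Γ' => ‖∑ k ∈ Γ', Complex.exp (((Real.pi * k / n : ℝ) : ℂ) * Complex.I)‖))
          = 1 / Real.sin (Real.pi / (2 * n)) ∧
      ‖∑ k ∈ Finset.range (2 * n),
          Complex.exp (((-(Real.pi * k / n) : ℝ) : ℂ) * Complex.I) *
            Complex.exp (((Real.pi * k / n : ℝ) : ℂ) * Complex.I)‖ = 2 * n) ∧
    Tendsto (fun n : ℕ => (1 / Real.sin (Real.pi / (2 * n))) / (2 * n)) atTop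
      (nhds (1 / Real.pi)) ∧
    ∀ C : ℝ,
      (∀ (Γ : Finset ℕ) (g α : ℕ → ℂ), (∀ k ∈ Γ, ‖α k‖ ≤ 1) →
        ‖∑ k ∈ Γ, α k * g k‖ ≤
          C * Γ.powerset.sup' (Finset.powerset_nonempty Γ) (fun Γ' => ‖∑ k ∈ Γ', g k‖)) →
      Real.pi ≤ C := by

  have hpi := Real.pi_pos
  have hpart1 : ∀ n : ℕ, 0 < n →
      ((Finset.range (2 * n)).powerset.sup' (Finset.powerset_nonempty _)
          (fun Γ' => ‖∑ k ∈ Γ', Complex.exp (((Real.pi * k / n : ℝ) : ℂ) * Complex.I)‖))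
          = 1 / Real.sin (Real.pi / (2 * n)) := by
    intro n hn
    apply le_antisymm
    · exact Finset.sup'_le _ _ (fun Γ' hΓ' => lemB hn Γ' (Finset.mem_powerset.mp hΓ'))
    · have hmem : Finset.range n ∈ (Finset.range (2*n)).powerset :=
        Finset.mem_powerset.mpr (Finset.range_subset_range.mpr (by omega))
      exact Finset.le_sup'_of_le _ hmem (lemA hn).ge
  have hpart2 : ∀ n : ℕ, 0 < n →
      ‖∑ k ∈ Finset.range (2 * n),
          Complex.exp (((-(Real.pi * k / n) : ℝ) : ℂ) * Complex.I) *
            Complex.exp (((Real.pi * k / n : ℝ) : ℂ) * Complex.I)‖ = 2 * n := by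
    intro n hn
    have hterm : ∀ k : ℕ,
        Complex.exp (((-(Real.pi * k / n) : ℝ) : ℂ) * Complex.I) *
          Complex.exp (((Real.pi * k / n : ℝ) : ℂ) * Complex.I) = 1 := by
      intro k
      rw [← Complex.exp_add,
        show ((-(Real.pi * k / n) : ℝ):ℂ) * I + ((Real.pi * k / n : ℝ):ℂ) * I = 0 by
          push_cast; ring,
        Complex.exp_zero]
    simp only [hterm]
    rw [Finset.sum_const, Finset.card_range, nsmul_eq_mul, mul_one]
    rw [Complex.norm_natCast]
    push_cast
    ring
  -- the limit
  have t2 : Tendsto (fun x : ℝ => x / Real.sin x) (nhdsWithin 0 {0}ᶜ) (nhds 1) := by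
    have h := Real.hasDerivAt_sin 0
    rw [hasDerivAt_iff_tendsto_slope] at h
    rw [Real.cos_zero] at h
    have h2 := h.inv₀ (by norm_num)
    rw [inv_one] at h2
    refine h2.congr (fun y => ?_)
    simp [slope_def_field, Real.sin_zero, inv_div, div_eq_mul_inv]
  have t1 : Tendsto (fun n : ℕ => Real.pi / (2 * (n:ℝ))) atTop (nhdsWithin 0 {0}ᶜ) := by
    apply tendsto_nhdsWithin_of_tendsto_nhds_of_eventually_within
    · exact Tendsto.div_atTop tendsto_const_nhds
        (Tendsto.const_mul_atTop two_pos tendsto_natCast_atTop_atTop)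
    · filter_upwards [eventually_ge_atTop 1] with n hn
      have hn' : (0:ℝ) < n := by exact_mod_cast hn
      have : 0 < Real.pi / (2*(n:ℝ)) := by positivity
      simp [this.ne']
  have hmain : Tendsto (fun n : ℕ =>
      (Real.pi / (2*(n:ℝ))) / Real.sin (Real.pi / (2*(n:ℝ)))) atTop (nhds 1) := t2.comp t1
  have hlim : Tendsto (fun n : ℕ => (1 / Real.sin (Real.pi / (2 * n))) / (2 * n)) atTop
      (nhds (1 / Real.pi)) := by
    have h3 := hmain.const_mul (1/Real.pi)
    rw [mul_one] at h3
    refine h3.congr' ?_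
    filter_upwards [eventually_ge_atTop 1] with n hn
    have hn0 : 0 < n := hn
    have hn' : (0:ℝ) < n := by exact_mod_cast hn
    have hs := sin_pos_aux hn0
    field_simp
  refine ⟨fun n hn => ⟨hpart1 n hn, hpart2 n hn⟩, hlim, ?_⟩
  intro C hC
  have hinv : Tendsto (fun n : ℕ =>
      ((1 / Real.sin (Real.pi / (2 * n))) / (2 * n))⁻¹) atTop (nhds Real.pi) := by
    have := hlim.inv₀ (by positivity)
    rwa [one_div, inv_inv] at this
  apply le_of_tendsto hinv
  filter_upwards [eventually_ge_atTop 1] with n hn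
  have hn0 : 0 < n := hn
  have hn' : (0:ℝ) < n := by exact_mod_cast hn
  have hs := sin_pos_aux hn0
  have happ := hC (Finset.range (2*n))
    (fun k => Complex.exp (((Real.pi * k / n : ℝ) : ℂ) * Complex.I))
    (fun k => Complex.exp (((-(Real.pi * k / n) : ℝ) : ℂ) * Complex.I))
    (fun k _ => le_of_eq (Complex.norm_exp_ofReal_mul_I _))
  rw [hpart1 n hn0, hpart2 n hn0] at happ
  have h4 : ((1 / Real.sin (Real.pi / (2 * n))) / (2 * (n:ℝ)))⁻¹
      = 2 * (n:ℝ) * Real.sin (Real.pi / (2 * n)) := by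
    field_simp
  rw [h4]
  rw [mul_one_div, le_div_iff₀ hs] at happ
  linarith
end

section
/- Let L be a countably infinite discrete abelian group with compact dual L̂ whose Haar measure is normalized to total mass 1, and let V ⊆ L̂ be an open set with −V = V and positive Haar measure |V|. Then for every nonempty finite set Γ ⊂ L one has ∫_{L̂} g_Γ(τ)·(𝟙_V ∗ 𝟙_V)(τ) dτ ≥ |V|², where 𝟙_V ∗ 𝟙_V denotes the convolution of the indicator function of V with itself. -/
open MeasureTheory
open scoped ENNReal

noncomputable section

variable {L : Type*} [AddCommGroup L] [TopologicalSpace L]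

/-- The bi-character `e(k,τ) = τ(k)` of a discrete abelian group `L`, valued in `ℂ`. -/
def bichar (k : L) (τ : PontryaginDual (Multiplicative L)) : ℂ :=
  (τ (Multiplicative.ofAdd k) : ℂ)

/-- `g_Γ(τ) = (1/card Γ)·|∑_{k∈Γ} e(k,τ)|²`. -/
def gfun (Γ : Finset L) (τ : PontryaginDual (Multiplicative L)) : ℝ :=
  (Γ.card : ℝ)⁻¹ * ‖∑ k ∈ Γ, bichar k τ‖ ^ 2

/-- Convolution `(f∗h)(τ) = ∫ f(τ−σ)h(σ) dσ` on the (multiplicatively written) compact dual. -/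
def dualConvR [MeasurableSpace (PontryaginDual (Multiplicative L))]
    (μ : Measure (PontryaginDual (Multiplicative L)))
    (f h : PontryaginDual (Multiplicative L) → ℝ)
    (τ : PontryaginDual (Multiplicative L)) : ℝ :=
  ∫ σ, f (τ * σ⁻¹) * h σ ∂μ

open Topology Filter in
lemma compact_dual (M : Type*) [CommMonoid M] [TopologicalSpace M] [DiscreteTopology M] :
    CompactSpace (ContinuousMonoidHom M Circle) := by
  rw [← isCompact_univ_iff]
  have he := ContinuousMonoidHom.isClosedEmbedding_toContinuousMap M Circle
  rw [he.isEmbedding.isCompact_iff]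
  have : (ContinuousMonoidHom.toContinuousMap '' Set.univ
      : Set C(M, Circle)) = Set.range ContinuousMonoidHom.toContinuousMap := Set.image_univ
  rw [this]
  apply ArzelaAscoli.isCompact_of_equicontinuous
  · -- the pointwise image is compact
    have : (ContinuousMap.toFun '' Set.range (ContinuousMonoidHom.toContinuousMap
        (A := M) (B := Circle))) = {f : M → Circle | f 1 = 1 ∧ ∀ x y, f (x*y) = f x * f y} := by
      ext f
      constructor
      · rintro ⟨g, ⟨h, rfl⟩, rfl⟩
        exact ⟨map_one h, map_mul h⟩
      · rintro ⟨h1, hmul⟩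
        refine ⟨⟨f, continuous_of_discreteTopology⟩, ⟨⟨⟨⟨f, h1⟩, hmul⟩, continuous_of_discreteTopology⟩, rfl⟩, rfl⟩
    rw [this]
    have hcl : IsClosed {f : M → Circle | f 1 = 1 ∧ ∀ x y, f (x*y) = f x * f y} := by
      simp only [Set.setOf_and, Set.setOf_forall]
      refine IsClosed.inter (isClosed_singleton.preimage (continuous_apply 1)) <|
        isClosed_iInter fun x => isClosed_iInter fun y =>
          isClosed_eq (continuous_apply (x*y)) ((continuous_apply x).mul (continuous_apply y))
    exact hcl.isCompact
  · intro x U hU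
    have hx : 𝓝 x = pure x := by rw [nhds_discrete]
    rw [hx, Filter.eventually_pure]
    exact fun i => refl_mem_uniformity hU

lemma sc_dual (M : Type*) [CommMonoid M] [TopologicalSpace M] [DiscreteTopology M] [Countable M] :
    SecondCountableTopology (ContinuousMonoidHom M Circle) := by
  haveI := compact_dual M
  let f : ContinuousMonoidHom M Circle → (M → Circle) := fun φ => ⇑φ
  have hf : Continuous f := by
    refine continuous_pi fun m => ?_
    exact (continuous_eval_const m :
        Continuous fun g : C(M, Circle) => g m).comp
      (ContinuousMonoidHom.isInducing_toContinuousMap _ _).continuous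
  have hinj : Function.Injective f := fun φ ψ h =>
    DFunLike.ext φ ψ fun m => congrFun h m
  exact (hf.isClosedEmbedding hinj).isEmbedding.secondCountableTopology

lemma bichar_continuous (k : L) : Continuous (bichar (L := L) k) := by
  have h1 : Continuous fun τ : PontryaginDual (Multiplicative L) =>
      τ (Multiplicative.ofAdd k) :=
    (continuous_eval_const (Multiplicative.ofAdd k) :
        Continuous fun f : C(Multiplicative L, Circle) => f (Multiplicative.ofAdd k)).comp
      (ContinuousMonoidHom.isInducing_toContinuousMap _ _).continuous
  exact (continuous_subtype_val : Continuous ((↑) : Circle → ℂ)).comp h1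

lemma bichar_norm (k : L) (τ : PontryaginDual (Multiplicative L)) : ‖bichar k τ‖ = 1 := by
  simp [bichar, Circle.norm_coe]

lemma bichar_mul (k : L) (ρ σ : PontryaginDual (Multiplicative L)) :
    bichar k (ρ * σ) = bichar k ρ * bichar k σ :=
  Circle.coe_mul _ _

lemma bichar_inv (k : L) (ρ : PontryaginDual (Multiplicative L)) :
    bichar k ρ⁻¹ = starRingEnd ℂ (bichar k ρ) :=
  Circle.coe_inv_eq_conj _

lemma norm_sq_eq_mul_conj (z : ℂ) : (‖z‖ ^ 2 : ℝ) = (z * starRingEnd ℂ z).re := by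
  rw [Complex.mul_conj]
  simp [Complex.sq_norm]

/-- If `V` is a symmetric open subset of the dual of positive Haar measure, then for every
nonempty finite `Γ ⊆ L` one has `∫ g_Γ · (𝟙_V ∗ 𝟙_V) ≥ |V|²`. -/
theorem integral_gfun_mul_indicator_conv_indicator_ge
    [DiscreteTopology L] [Countable L] [Infinite L]
    [MeasurableSpace (PontryaginDual (Multiplicative L))]
    [BorelSpace (PontryaginDual (Multiplicative L))]
    (μ : Measure (PontryaginDual (Multiplicative L))) [μ.IsHaarMeasure] [IsProbabilityMeasure μ]
    (V : Set (PontryaginDual (Multiplicative L))) (hVopen : IsOpen V) (hVsymm : V⁻¹ = V)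
    (hVpos : 0 < μ V) (Γ : Finset L) (hΓ : Γ.Nonempty) :
    (μ V).toReal ^ 2 ≤
      ∫ τ, gfun Γ τ * dualConvR μ (V.indicator 1) (V.indicator 1) τ ∂μ := by
  haveI : CompactSpace (PontryaginDual (Multiplicative L)) := compact_dual _
  haveI : Countable (Multiplicative L) := inferInstanceAs (Countable L)
  haveI : SecondCountableTopology (PontryaginDual (Multiplicative L)) := sc_dual _
  haveI : μ.IsInvInvariant := inferInstance
  have hVm : MeasurableSet V := hVopen.measurableSet
  set χ : PontryaginDual (Multiplicative L) → ℝ := V.indicator 1 with hχdef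
  set n : ℝ := (Γ.card : ℝ) with hndef
  have hn : 0 < n := by rw [hndef]; exact_mod_cast Finset.card_pos.mpr hΓ
  have hχ01 : ∀ τ, χ τ = 0 ∨ χ τ = 1 := by
    intro τ; by_cases h : τ ∈ V <;> simp [hχdef, Set.indicator, h]
  have hχ0 : ∀ τ, 0 ≤ χ τ := by rintro τ; rcases hχ01 τ with h | h <;> simp [h]
  have hχ1 : ∀ τ, χ τ ≤ 1 := by rintro τ; rcases hχ01 τ with h | h <;> simp [h]
  have hχsq : ∀ τ, χ τ * χ τ = χ τ := by
    rintro τ; rcases hχ01 τ with h | h <;> simp [h]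
  have hχmeas : Measurable χ := measurable_const.indicator hVm
  have hχinv : ∀ τ, χ τ⁻¹ = χ τ := by
    intro τ
    have : τ⁻¹ ∈ V ↔ τ ∈ V := by
      conv_rhs => rw [← hVsymm]
      exact (Set.mem_inv).symm
    by_cases h : τ ∈ V <;> simp [hχdef, Set.indicator, h, this]
  -- gfun facts
  have hgcont : Continuous (gfun Γ) := by
    apply Continuous.mul continuous_const
    exact (continuous_finset_sum Γ fun k _ => bichar_continuous k).norm.pow 2
  have hg0 : ∀ τ, 0 ≤ gfun Γ τ := by
    intro τ; exact mul_nonneg (by positivity) (by positivity)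
  have hgbound : ∀ τ, gfun Γ τ ≤ n := by
    intro τ
    have h1 : ‖∑ k ∈ Γ, bichar k τ‖ ≤ n := by
      refine (norm_sum_le _ _).trans ?_
      rw [hndef]
      refine le_of_eq ?_
      rw [Finset.sum_congr rfl (fun k _ => bichar_norm k τ)]
      simp
    have h2 : ‖∑ k ∈ Γ, bichar k τ‖ ^ 2 ≤ n ^ 2 :=
      pow_le_pow_left₀ (norm_nonneg _) h1 2
    calc gfun Γ τ ≤ n⁻¹ * n ^ 2 := by
          unfold gfun
          exact mul_le_mul_of_nonneg_left h2 (by positivity)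
      _ = n := by field_simp [pow_two]
  -- the w functions
  set w : L → L → PontryaginDual (Multiplicative L) → ℂ := fun k l ρ =>
    (χ ρ : ℂ) * (bichar k ρ * starRingEnd ℂ (bichar l ρ)) with hwdef
  have hwmeas : ∀ k l, Measurable (w k l) := by
    intro k l
    exact (Complex.measurable_ofReal.comp hχmeas).mul
      (((bichar_continuous k).measurable).mul
        (Complex.continuous_conj.measurable.comp (bichar_continuous l).measurable))
  have hwbound : ∀ k l ρ, ‖w k l ρ‖ ≤ 1 := by
    intro k l ρ
    simp only [hwdef]
    simp only [norm_mul, Complex.norm_real, RCLike.norm_conj, bichar_norm]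
    rcases hχ01 ρ with h | h <;> simp [h]
  have hwint : ∀ k l, Integrable (w k l) μ :=
    fun k l => (Integrable.mono' (integrable_const 1) (hwmeas k l).aestronglyMeasurable
      (Filter.Eventually.of_forall (hwbound k l)))
  set c : L → L → ℂ := fun k l => ∫ ρ, w k l ρ ∂μ with hcdef
  have hcconj : ∀ k l, starRingEnd ℂ (c k l) = c k l := by
    intro k l
    simp only [hcdef]
    rw [← integral_conj]
    rw [← MeasureTheory.integral_inv_eq_self (fun ρ => starRingEnd ℂ (w k l ρ)) μ]
    congr 1
    ext ρ
    simp only [hwdef, map_mul, Complex.conj_conj, Complex.conj_ofReal, hχinv, bichar_inv]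
  have hcre : ∀ k l, c k l = ((c k l).re : ℂ) :=
    fun k l => (Complex.conj_eq_iff_re.mp (hcconj k l)).symm
  have hcdiag : ∀ k, c k k = ((μ V).toReal : ℂ) := by
    intro k
    simp only [hcdef]
    have : ∀ ρ, w k k ρ = ((χ ρ : ℝ) : ℂ) := by
      intro ρ
      simp only [hwdef]
      rw [Complex.mul_conj]
      have : Complex.normSq (bichar k ρ) = 1 := by
        have := bichar_norm k ρ
        simp [Complex.normSq_eq_norm_sq, this]
      simp [this]
    simp only [this]
    rw [← measureReal_def, ← integral_indicator_one (μ := μ) hVm]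
    exact integral_ofReal
  -- pointwise identity
  have hpoint : ∀ ρ σ, gfun Γ (ρ * σ) * (χ ρ * χ σ)
      = n⁻¹ * (∑ k ∈ Γ, ∑ l ∈ Γ, w k l ρ * w k l σ).re := by
    intro ρ σ
    have hS : (∑ k ∈ Γ, bichar k (ρ * σ)) = ∑ k ∈ Γ, bichar k ρ * bichar k σ :=
      Finset.sum_congr rfl fun k _ => bichar_mul k ρ σ
    have hsum : ∑ k ∈ Γ, ∑ l ∈ Γ, w k l ρ * w k l σ
        = ((χ ρ * χ σ : ℝ) : ℂ) * ((∑ k ∈ Γ, bichar k ρ * bichar k σ) *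
            starRingEnd ℂ (∑ l ∈ Γ, bichar l ρ * bichar l σ)) := by
      rw [map_sum, Finset.sum_mul_sum, Finset.mul_sum]
      refine (Finset.sum_congr rfl fun k _ => ?_).symm
      rw [Finset.mul_sum]
      refine Finset.sum_congr rfl fun l _ => ?_
      simp only [hwdef, map_mul, Complex.ofReal_mul]
      ring
    rw [hsum, Complex.re_ofReal_mul, ← norm_sq_eq_mul_conj]
    simp only [gfun]
    rw [hS]
    ring
  -- integrability of the single and double families
  have hwσint : ∀ (k l : L) σ, Integrable (fun ρ => w k l ρ * w k l σ) μ :=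
    fun k l σ => (hwint k l).mul_const _
  have hint1 : ∀ σ, Integrable (fun ρ => ∑ k ∈ Γ, ∑ l ∈ Γ, w k l ρ * w k l σ) μ :=
    fun σ => integrable_finset_sum _ fun k _ =>
      integrable_finset_sum _ fun l _ => hwσint k l σ
  have hint2 : Integrable (fun σ => ∑ k ∈ Γ, ∑ l ∈ Γ, c k l * w k l σ) μ :=
    integrable_finset_sum _ fun k _ => integrable_finset_sum _ fun l _ =>
      (hwint k l).const_mul _
  have integral_complex_re : ∀ {f : PontryaginDual (Multiplicative L) → ℂ},
      Integrable f μ → ∫ x, (f x).re ∂μ = (∫ x, f x ∂μ).re :=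
    fun hf => integral_re hf
  have h1 : ∀ σ, ∫ ρ, (∑ k ∈ Γ, ∑ l ∈ Γ, w k l ρ * w k l σ) ∂μ
      = ∑ k ∈ Γ, ∑ l ∈ Γ, c k l * w k l σ := by
    intro σ
    rw [integral_finset_sum _ (fun k _ =>
      integrable_finset_sum _ fun l _ => hwσint k l σ)]
    refine Finset.sum_congr rfl fun k _ => ?_
    rw [integral_finset_sum _ (fun l _ => hwσint k l σ)]
    exact Finset.sum_congr rfl fun l _ => integral_mul_const _ _
  have h2 : ∫ σ, (∑ k ∈ Γ, ∑ l ∈ Γ, c k l * w k l σ) ∂μ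
      = ∑ k ∈ Γ, ∑ l ∈ Γ, c k l * c k l := by
    rw [integral_finset_sum _ (fun k _ =>
      integrable_finset_sum _ fun l _ => (hwint k l).const_mul _)]
    refine Finset.sum_congr rfl fun k _ => ?_
    rw [integral_finset_sum _ (fun l _ => (hwint k l).const_mul _)]
    exact Finset.sum_congr rfl fun l _ => integral_const_mul _ _
  -- Fubini integrability
  have hF : Integrable (Function.uncurry fun τ σ =>
      gfun Γ τ * (χ (τ * σ⁻¹) * χ σ)) (μ.prod μ) := by
    have hmeas : Measurable fun p : PontryaginDual (Multiplicative L) ×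
        PontryaginDual (Multiplicative L) =>
        gfun Γ p.1 * (χ (p.1 * p.2⁻¹) * χ p.2) :=
      (hgcont.measurable.comp measurable_fst).mul
        ((hχmeas.comp (measurable_fst.mul measurable_snd.inv)).mul
          (hχmeas.comp measurable_snd))
    refine Integrable.mono' (integrable_const n) hmeas.aestronglyMeasurable ?_
    refine Filter.Eventually.of_forall fun p => ?_
    have h0 : 0 ≤ gfun Γ p.1 * (χ (p.1 * p.2⁻¹) * χ p.2) :=
      mul_nonneg (hg0 _) (mul_nonneg (hχ0 _) (hχ0 _))
    rw [Function.uncurry, Real.norm_of_nonneg h0]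
    calc gfun Γ p.1 * (χ (p.1 * p.2⁻¹) * χ p.2) ≤ n * 1 := by
          refine mul_le_mul (hgbound _) ?_ (mul_nonneg (hχ0 _) (hχ0 _)) hn.le
          calc χ (p.1 * p.2⁻¹) * χ p.2 ≤ 1 * 1 :=
                mul_le_mul (hχ1 _) (hχ1 _) (hχ0 _) zero_le_one
            _ = 1 := one_mul 1
      _ = n := mul_one n
  -- the key identity
  have key : ∫ τ, gfun Γ τ * dualConvR μ χ χ τ ∂μ
      = n⁻¹ * ∑ k ∈ Γ, ∑ l ∈ Γ, ((c k l).re) ^ 2 := by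
    have e1 : ∀ τ, gfun Γ τ * dualConvR μ χ χ τ
        = ∫ σ, gfun Γ τ * (χ (τ * σ⁻¹) * χ σ) ∂μ := by
      intro τ
      rw [dualConvR, ← integral_const_mul]
    simp only [e1]
    rw [MeasureTheory.integral_integral_swap hF]
    have e3 : ∀ σ, ∫ τ, gfun Γ τ * (χ (τ * σ⁻¹) * χ σ) ∂μ
        = ∫ ρ, gfun Γ (ρ * σ) * (χ ρ * χ σ) ∂μ := by
      intro σ
      conv_lhs => rw [← MeasureTheory.integral_mul_right_eq_self
        (fun τ => gfun Γ τ * (χ (τ * σ⁻¹) * χ σ)) σ]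
      simp only [mul_inv_cancel_right]
    simp only [e3]
    have e4 : ∀ σ, ∫ ρ, gfun Γ (ρ * σ) * (χ ρ * χ σ) ∂μ
        = n⁻¹ * (∑ k ∈ Γ, ∑ l ∈ Γ, c k l * w k l σ).re := by
      intro σ
      simp only [hpoint]
      rw [integral_const_mul, integral_complex_re (hint1 σ), h1 σ]
    simp only [e4]
    rw [integral_const_mul, integral_complex_re hint2, h2]
    congr 1
    rw [Complex.re_sum]
    refine Finset.sum_congr rfl fun k _ => ?_
    rw [Complex.re_sum]
    refine Finset.sum_congr rfl fun l _ => ?_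
    rw [hcre k l, ← Complex.ofReal_mul]
    simp [pow_two]
  rw [key]
  -- final inequality
  have hdiag : ∀ k ∈ Γ, (μ V).toReal ^ 2 ≤ ∑ l ∈ Γ, ((c k l).re) ^ 2 := by
    intro k hk
    have hc : ((c k k).re) ^ 2 = (μ V).toReal ^ 2 := by rw [hcdiag k]; simp
    calc (μ V).toReal ^ 2 = ((c k k).re) ^ 2 := hc.symm
      _ ≤ ∑ l ∈ Γ, ((c k l).re) ^ 2 :=
          Finset.single_le_sum (f := fun l => ((c k l).re) ^ 2)
            (fun l _ => sq_nonneg _) hk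
  calc (μ V).toReal ^ 2 = n⁻¹ * (n * (μ V).toReal ^ 2) := by field_simp
    _ ≤ n⁻¹ * ∑ k ∈ Γ, ∑ l ∈ Γ, ((c k l).re) ^ 2 := by
        refine mul_le_mul_of_nonneg_left ?_ (inv_nonneg.mpr hn.le)
        have hns : n * (μ V).toReal ^ 2 = ∑ _k ∈ Γ, (μ V).toReal ^ 2 := by
          rw [Finset.sum_const, hndef, nsmul_eq_mul]
        rw [hns]
        exact Finset.sum_le_sum hdiag
end
end

section
/- Let L be a countably infinite discrete abelian group with compact dual L̂. If Γ ⊆ L is a nonempty finite set such that all Fourier coefficients of g_Γ are either 0 or 1, i.e., g_Γ(τ) = ∑_{k∈S} e(k,τ) for some finite set S ⊆ L, then Γ = m + M for some m ∈ L and some finite subgroup M of L, and moreover S = M. -/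
open MeasureTheory
open scoped ENNReal

noncomputable section

variable {L : Type*} [AddCommGroup L] [TopologicalSpace L]

/-- Evaluation at `k` as a monoid hom on the dual group. -/
def evalHom (k : L) : PontryaginDual (Multiplicative L) →* ℂ where
  toFun τ := bichar k τ
  map_one' := rfl
  map_mul' τ σ := by simp [bichar]; rfl

/-- The cast map `ℚ/ℤ → ℝ/ℤ`. -/
def castCircle : AddCircle (1:ℚ) →+ AddCircle (1:ℝ) :=
  QuotientAddGroup.map _ _ (Rat.castHom ℝ).toAddMonoidHom <| by
    intro x hx
    obtain ⟨n, hn⟩ := AddSubgroup.mem_zmultiples_iff.mp hx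
    exact AddSubgroup.mem_comap.mpr <| AddSubgroup.mem_zmultiples_iff.mpr
      ⟨n, by push_cast [← hn]; simp⟩

lemma castCircle_eq_zero {x : AddCircle (1:ℚ)} (h : castCircle x = 0) : x = 0 := by
  induction x using QuotientAddGroup.induction_on with
  | H x =>
    have : ((x : ℝ) : AddCircle (1:ℝ)) = 0 := h
    rw [AddCircle.coe_eq_zero_iff] at this ⊢
    obtain ⟨n, hn⟩ := this
    refine ⟨n, ?_⟩
    have : ((n • (1:ℚ) : ℚ) : ℝ) = (x : ℝ) := by push_cast [← hn]; simp
    exact_mod_cast (Rat.cast_injective this)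

/-- A character of `L` valued in `ℚ/ℤ` gives an element of the Pontryagin dual. -/
def charToDual [DiscreteTopology L] (c : L →+ AddCircle (1:ℚ)) :
    PontryaginDual (Multiplicative L) :=
  { toFun := fun x => AddCircle.toCircle (castCircle (c x.toAdd))
    map_one' := by simp
    map_mul' := fun x y => by simp [AddCircle.toCircle_add]
    continuous_toFun := continuous_of_discreteTopology }

lemma evalHom_injective [DiscreteTopology L] :
    Function.Injective (fun k : L => evalHom k) := by
  intro k k' h
  by_contra hne
  have hd : k - k' ≠ 0 := sub_ne_zero.mpr hne
  obtain ⟨c, hc⟩ := CharacterModule.exists_character_apply_ne_zero_of_ne_zero hd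
  have hτ : evalHom k (charToDual c) = evalHom k' (charToDual c) := by
    simp only at h; rw [h]
  simp only [evalHom, MonoidHom.coe_mk, OneHom.coe_mk, bichar] at hτ
  have h1 : (charToDual (L := L) c) (Multiplicative.ofAdd k) =
      (charToDual (L := L) c) (Multiplicative.ofAdd k') := Circle.coe_inj.mp hτ
  have h2 : AddCircle.toCircle (castCircle (c k)) = AddCircle.toCircle (castCircle (c k')) := h1
  have h3 : castCircle (c k) = castCircle (c k') :=
    AddCircle.injective_toCircle one_ne_zero h2
  exact hc <| castCircle_eq_zero (by rw [map_sub, map_sub, h3, sub_self])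

lemma bichar_sub (a b : L) (τ : PontryaginDual (Multiplicative L)) :
    bichar (a - b) τ = bichar a τ * (starRingEnd ℂ) (bichar b τ) := by
  rw [bichar, bichar, bichar, ← Circle.coe_inv_eq_conj, ← Circle.coe_mul, ← map_inv, ← map_mul,
    ← ofAdd_neg, ← ofAdd_add, sub_eq_add_neg]

lemma expand (Γ : Finset L) (hΓ : Γ.Nonempty) (S : Finset L)
    (hcoeff : ∀ τ, (gfun Γ τ : ℂ) = ∑ k ∈ S, bichar k τ)
    (τ : PontryaginDual (Multiplicative L)) :
    ∑ a ∈ Γ, ∑ b ∈ Γ, bichar (a - b) τ = (Γ.card : ℂ) * ∑ k ∈ S, bichar k τ := by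
  have hc : (Γ.card : ℂ) ≠ 0 := Nat.cast_ne_zero.mpr hΓ.card_pos.ne'
  rw [← hcoeff τ]
  have : ∑ a ∈ Γ, ∑ b ∈ Γ, bichar (a - b) τ
      = (∑ a ∈ Γ, bichar a τ) * (starRingEnd ℂ) (∑ b ∈ Γ, bichar b τ) := by
    rw [map_sum, Finset.sum_mul_sum]
    exact Finset.sum_congr rfl fun a _ => Finset.sum_congr rfl fun b _ => bichar_sub a b τ
  rw [this, Complex.mul_conj', gfun]
  push_cast
  rw [← mul_assoc, mul_inv_cancel₀ hc, one_mul]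

/-- If `Γ ⊆ L` is a nonempty finite set such that all Fourier coefficients of `g_Γ` are `0`
or `1`, i.e. `g_Γ(τ) = ∑_{k∈S} e(k,τ)` for some finite `S ⊆ L`, then `Γ` is a coset `m + M`
of a finite subgroup `M` of `L`, and `S = M`. -/
theorem gfun_eq_sum_bichar_imp_coset
    [DiscreteTopology L] [Countable L] [Infinite L] [DecidableEq L]
    (Γ : Finset L) (hΓ : Γ.Nonempty) (S : Finset L)
    (hcoeff : ∀ τ, (gfun Γ τ : ℂ) = ∑ k ∈ S, bichar k τ) :
    ∃ (m : L) (M : AddSubgroup L) (hM : (M : Set L).Finite),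
      Γ = hM.toFinset.image (fun x => m + x) ∧ S = hM.toFinset := by
  classical
  set N : L → ℕ := fun k => ((Γ ×ˢ Γ).filter fun p => p.1 - p.2 = k).card with hNdef
  set D : Finset L := (Γ ×ˢ Γ).image fun p => p.1 - p.2 with hDdef
  set T : Finset L := D ∪ S with hTdef
  set g : L → ℂ := fun k => (N k : ℂ) - (Γ.card : ℂ) * (if k ∈ S then 1 else 0) with hgdef
  have hNzero : ∀ k ∉ D, N k = 0 := by
    intro k hk
    rw [hNdef, Finset.card_eq_zero, Finset.filter_eq_empty_iff]
    intro p hp hpk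
    exact hk (Finset.mem_image.mpr ⟨p, hp, hpk⟩)
  -- the linear combination over T vanishes
  have key : ∀ τ, ∑ k ∈ T, g k * bichar k τ = 0 := by
    intro τ
    have h1 : ∑ k ∈ D, (N k : ℂ) * bichar k τ = ∑ a ∈ Γ, ∑ b ∈ Γ, bichar (a - b) τ := by
      rw [← Finset.sum_product']
      rw [Finset.sum_comp (fun k => bichar k τ) (fun p : L × L => p.1 - p.2)]
      exact Finset.sum_congr rfl fun k _ => by rw [nsmul_eq_mul]
    have h2 : ∑ k ∈ T, (N k : ℂ) * bichar k τ = ∑ k ∈ D, (N k : ℂ) * bichar k τ :=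
      (Finset.sum_subset Finset.subset_union_left
        (fun k _ hk => by rw [hNzero k hk]; simp)).symm
    have h3 : ∑ k ∈ T, (if k ∈ S then (1:ℂ) else 0) * bichar k τ = ∑ k ∈ S, bichar k τ :=
      (Finset.sum_subset Finset.subset_union_right
        (fun k _ hk => by simp [hk])).symm.trans
        (Finset.sum_congr rfl fun k hk => by simp [hk])
    calc ∑ k ∈ T, g k * bichar k τ
        = ∑ k ∈ T, ((N k : ℂ) * bichar k τ
            - (Γ.card : ℂ) * ((if k ∈ S then (1:ℂ) else 0) * bichar k τ)) := by
          refine Finset.sum_congr rfl fun k _ => by rw [hgdef]; ring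
      _ = ∑ k ∈ T, (N k : ℂ) * bichar k τ
            - (Γ.card : ℂ) * ∑ k ∈ T, (if k ∈ S then (1:ℂ) else 0) * bichar k τ := by
          rw [Finset.sum_sub_distrib, Finset.mul_sum]
      _ = 0 := by
          rw [h2, h3, h1, expand Γ hΓ S hcoeff τ, sub_self]
  -- linear independence of characters
  have li : LinearIndependent ℂ (fun k : L =>
      ((evalHom k : PontryaginDual (Multiplicative L) →* ℂ) :
        PontryaginDual (Multiplicative L) → ℂ)) :=
    (linearIndependent_monoidHom (PontryaginDual (Multiplicative L)) ℂ).comp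
      (fun k => evalHom k) evalHom_injective
  have hzero : ∀ k ∈ T, g k = 0 := by
    intro k hk
    refine linearIndependent_iff'.mp li T g ?_ k hk
    funext τ
    have := key τ
    simp only [Finset.sum_apply, Pi.smul_apply, smul_eq_mul, Pi.zero_apply]
    exact this
  -- coefficient facts
  have fact1 : ∀ k ∈ S, N k = Γ.card := by
    intro k hk
    have := hzero k (Finset.mem_union_right _ hk)
    rw [hgdef] at this
    simp only [hk, if_true, mul_one, sub_eq_zero] at this
    exact_mod_cast this
  have fact2 : ∀ k ∉ S, N k = 0 := by
    intro k hk
    by_cases hkT : k ∈ T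
    · have := hzero k hkT
      rw [hgdef] at this
      simp only [hk, if_false, mul_zero, sub_zero] at this
      exact_mod_cast this
    · exact hNzero k (fun h => hkT (Finset.mem_union_left _ h))
  -- N k counts the filtered set
  have hNalt : ∀ k, N k = (Γ.filter fun a => a - k ∈ Γ).card := by
    intro k
    rw [hNdef]
    apply Finset.card_bij' (fun p _ => p.1) (fun a _ => (a, a - k))
    · intro p hp
      simp only [Finset.mem_filter, Finset.mem_product] at hp ⊢
      have h2 : p.2 = p.1 - k := by rw [← hp.2]; abel
      exact ⟨hp.1.1, h2 ▸ hp.1.2⟩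
    · intro a ha
      simp only [Finset.mem_filter] at ha
      simp only [Finset.mem_filter, Finset.mem_product]
      exact ⟨⟨ha.1, ha.2⟩, by abel⟩
    · intro p hp
      simp only [Finset.mem_filter, Finset.mem_product] at hp
      have h2 : p.2 = p.1 - k := by rw [← hp.2]; abel
      exact Prod.ext rfl h2.symm
    · intro a _; rfl
  -- membership in S iff stabilizer condition
  have hSiff : ∀ k, k ∈ S ↔ ∀ a ∈ Γ, a - k ∈ Γ := by
    intro k
    constructor
    · intro hk
      have h := fact1 k hk
      rw [hNalt] at h
      have : Γ.filter (fun a => a - k ∈ Γ) = Γ :=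
        Finset.eq_of_subset_of_card_le (Finset.filter_subset _ _) h.ge
      intro a ha
      have h5 : a ∈ Γ.filter (fun a => a - k ∈ Γ) := by rw [this]; exact ha
      exact (Finset.mem_filter.mp h5).2
    · intro h
      by_contra hk
      have h0 := fact2 k hk
      rw [hNalt, Finset.card_eq_zero, Finset.filter_eq_empty_iff] at h0
      obtain ⟨a, ha⟩ := hΓ
      exact h0 ha (h a ha)
  -- the subgroup
  have neg_prop : ∀ x : L, (∀ a ∈ Γ, a - x ∈ Γ) → ∀ a ∈ Γ, a + x ∈ Γ := by
    intro x hx a ha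
    have himg : Γ.image (fun a => a - x) = Γ := by
      apply Finset.eq_of_subset_of_card_le
      · intro b hb
        obtain ⟨c, hc, rfl⟩ := Finset.mem_image.mp hb
        exact hx c hc
      · rw [Finset.card_image_of_injective _ (fun u v huv => by
          simpa using sub_left_injective huv)]
    rw [← himg] at ha
    obtain ⟨b, hb, hab⟩ := Finset.mem_image.mp ha
    have : b = a + x := by rw [← hab]; abel
    rw [← this]; exact hb
  set M : AddSubgroup L :=
    { carrier := ↑S
      zero_mem' := by
        simp only [Finset.coe_sort_coe, Finset.mem_coe]
        exact (hSiff 0).mpr (fun a ha => by simpa using ha)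
      add_mem' := by
        intro x y hx hy
        simp only [Finset.mem_coe] at hx hy ⊢
        refine (hSiff (x + y)).mpr fun a ha => ?_
        have h1 := (hSiff x).mp hx a ha
        have h2 := (hSiff y).mp hy (a - x) h1
        have : a - (x + y) = a - x - y := by abel
        rw [this]; exact h2
      neg_mem' := by
        intro x hx
        simp only [Finset.mem_coe] at hx ⊢
        refine (hSiff (-x)).mpr fun a ha => ?_
        have : a - (-x) = a + x := by abel
        rw [this]
        exact neg_prop x ((hSiff x).mp hx) a ha } with hMdef
  have hM : ((M : Set L)).Finite := S.finite_toSet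
  have hMS : hM.toFinset = S := by
    ext x
    simp [Set.Finite.mem_toFinset, hMdef]
  -- card S = card Γ
  have hSsubD : S ⊆ D := by
    intro k hk
    have h := fact1 k hk
    have hpos : 0 < N k := h ▸ hΓ.card_pos
    rw [hNdef, Finset.card_pos] at hpos
    obtain ⟨p, hp⟩ := hpos
    simp only [Finset.mem_filter] at hp
    exact Finset.mem_image.mpr ⟨p, hp.1, hp.2⟩
  have hsumD : ∑ k ∈ D, N k = Γ.card * Γ.card := by
    have := (Finset.card_eq_sum_card_image (fun p : L × L => p.1 - p.2) (Γ ×ˢ Γ)).symm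
    rw [Finset.card_product] at this
    exact this
  have hsumS : ∑ k ∈ D, N k = Γ.card * S.card := by
    rw [← Finset.sum_subset hSsubD (fun k _ hk => fact2 k hk)]
    rw [Finset.sum_congr rfl (fun k hk => fact1 k hk)]
    simp [mul_comm]
  have hScard : S.card = Γ.card :=
    (Nat.eq_of_mul_eq_mul_left hΓ.card_pos (hsumD.symm.trans hsumS)).symm
  -- the coset
  obtain ⟨m, hm⟩ := hΓ
  have hsub : S.image (fun x => m + x) ⊆ Γ := by
    intro b hb
    obtain ⟨s, hs, rfl⟩ := Finset.mem_image.mp hb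
    have hns : -s ∈ S := M.neg_mem' hs
    have := (hSiff (-s)).mp hns m hm
    rwa [sub_neg_eq_add] at this
  have hΓeq : Γ = S.image (fun x => m + x) := by
    refine (Finset.eq_of_subset_of_card_le hsub ?_).symm
    rw [Finset.card_image_of_injective _ (add_right_injective m), hScard]
  exact ⟨m, M, hM, by rw [hMS]; exact hΓeq, hMS.symm⟩
end
end
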